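/- arXiv:1704.02367 — 6 statements merged into one kernel-verified Lean document; each statement's English description precedes it below -/
import Mathlib

section
/- For any finite set L, any two multipartitions M and N of L, and any real values λ_i for i ∈ L, there exist integers ℓ_i with ℓ_i ∈ {⌊λ_i⌋, ⌈λ_i⌉} for every i ∈ L, such that for every A ∈ M and every A ∈ N it holds that Σ_{i∈A} ℓ_i ∈ {⌊Σ_{i∈A} λ_i⌋, ⌈Σ_{i∈A} λ_i⌉}. -/
open Finset

namespace RoundingAux
open scoped Classical

def IsInt (x : ℝ) : Prop := ∃ z : ℤ, x = (z : ℝ)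

lemma isInt_sum {α : Type*} (s : Finset α) (f : α → ℝ)
    (h : ∀ a ∈ s, IsInt (f a)) : IsInt (∑ a ∈ s, f a) := by
  classical
  induction s using Finset.cons_induction with
  | empty => exact ⟨0, by simp⟩
  | cons a s ha ih =>
    obtain ⟨z, hz⟩ := h a (by simp)
    obtain ⟨w, hw⟩ := ih (fun b hb => h b (by simp [hb]))
    exact ⟨z + w, by rw [Finset.sum_cons, hz, hw]; push_cast; ring⟩

lemma isInt_sub {x y : ℝ} (hx : IsInt x) (hy : IsInt y) : IsInt (x - y) := by
  obtain ⟨z, hz⟩ := hx; obtain ⟨w, hw⟩ := hy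
  exact ⟨z - w, by rw [hz, hw]; push_cast; ring⟩

variable {L : Type*} [Fintype L] [DecidableEq L]

lemma exists_blocks (P : Finset (Finset L))
    (hsing : ∀ i : L, {i} ∈ P)
    (hlamr : ∀ A ∈ P, ∀ B ∈ P, Disjoint A B ∨ A ⊆ B ∨ B ⊆ A)
    (lam : L → ℝ) :
    ∃ BM : Finset (Finset L),
      (∀ τ₁ ∈ BM, ∀ τ₂ ∈ BM, τ₁ ≠ τ₂ → Disjoint τ₁ τ₂) ∧
      (∀ τ ∈ BM, 2 ≤ τ.card ∧ ∀ i ∈ τ, ¬ IsInt (lam i)) ∧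
      (∀ d : L → ℝ, (∀ j, IsInt (lam j) → d j = 0) →
        (∀ τ ∈ BM, ∑ i ∈ τ, d i = 0) →
        ∀ A ∈ P, IsInt (∑ i ∈ A, lam i) → ∑ i ∈ A, d i = 0) := by
  classical
  set T : L → Finset (Finset L) :=
    fun i => P.filter (fun A => IsInt (∑ j ∈ A, lam j) ∧ i ∈ A) with hT
  have hmin : ∀ i : L, (T i).Nonempty → ∃ B ∈ T i, ∀ C ∈ T i, B ⊆ C := by
    intro i hi
    obtain ⟨B, hB, hBmin⟩ := Finset.exists_min_image (T i) Finset.card hi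
    refine ⟨B, hB, fun C hC => ?_⟩
    have hBP : B ∈ P := (Finset.mem_filter.1 hB).1
    have hCP : C ∈ P := (Finset.mem_filter.1 hC).1
    have hiB : i ∈ B := (Finset.mem_filter.1 hB).2.2
    have hiC : i ∈ C := (Finset.mem_filter.1 hC).2.2
    rcases hlamr B hBP C hCP with hd | hbc | hcb
    · exact absurd hiC (Finset.disjoint_left.1 hd hiB)
    · exact hbc
    · exact le_of_eq (Finset.eq_of_subset_of_card_le hcb (hBmin C hC)).symm
  choose Bf hBf1 hBf2 using hmin
  set m : L → Option (Finset L) :=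
    fun i => if h : (T i).Nonempty then some (Bf i h) else none with hm
  have hmem_m : ∀ {i : L} {A : Finset L}, m i = some A →
      A ∈ T i ∧ ∀ C ∈ T i, A ⊆ C := by
    intro i A h
    simp only [hm] at h
    split_ifs at h with hne
    · obtain rfl : Bf i hne = A := Option.some_injective _ h
      exact ⟨hBf1 i hne, hBf2 i hne⟩
  set tok : Finset L → Finset L :=
    fun A => Finset.univ.filter (fun i => m i = some A) with htok
  have htokmem : ∀ {i : L} {A : Finset L}, i ∈ tok A ↔ m i = some A := by
    intro i A; simp [htok]
  have htokA : ∀ A : Finset L, tok A ⊆ A := by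
    intro A i hi
    exact (Finset.mem_filter.1 (hmem_m (htokmem.1 hi)).1).2.2
  have himg : ∀ A ∈ P, IsInt (∑ i ∈ A, lam i) → ∀ o ∈ A.image m,
      ∃ B, o = some B ∧ B ∈ P ∧ IsInt (∑ i ∈ B, lam i) ∧ B ⊆ A ∧
        A.filter (fun i => m i = o) = tok B := by
    intro A hAP hAint o ho
    obtain ⟨i, hiA, rfl⟩ := Finset.mem_image.1 ho
    have hATi : A ∈ T i := by
      simp only [hT, Finset.mem_filter]; exact ⟨hAP, hAint, hiA⟩
    have hne : (T i).Nonempty := ⟨A, hATi⟩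
    have hmi : m i = some (Bf i hne) := by simp [hm, hne]
    set B := Bf i hne with hB
    have hBTi : B ∈ T i := hBf1 i hne
    refine ⟨B, hmi, (Finset.mem_filter.1 hBTi).1, (Finset.mem_filter.1 hBTi).2.1,
      hBf2 i hne A hATi, ?_⟩
    ext j
    simp only [Finset.mem_filter, htok, Finset.mem_univ, true_and, hmi]
    constructor
    · rintro ⟨-, h⟩; exact h
    · intro h
      exact ⟨hBf2 i hne A hATi ((Finset.mem_filter.1 (hmem_m h).1).2.2), h⟩
  have htokint : ∀ n : ℕ, ∀ A : Finset L, A.card ≤ n → A ∈ P →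
      IsInt (∑ i ∈ A, lam i) → IsInt (∑ i ∈ tok A, lam i) := by
    intro n
    induction n with
    | zero =>
      intro A hA _ _
      have hAe : A = ∅ := Finset.card_eq_zero.1 (Nat.le_zero.1 hA)
      have : tok A = ∅ := Finset.subset_empty.1 (hAe ▸ htokA A)
      rw [this]; exact ⟨0, by simp⟩
    | succ n ih =>
      intro A hcard hAP hAint
      by_cases hmem : some A ∈ A.image m
      · have hsplit : ∑ i ∈ A, lam i
            = (∑ i ∈ A.filter (fun i => m i = some A), lam i)
              + ∑ o ∈ (A.image m).erase (some A),
                  ∑ i ∈ A.filter (fun i => m i = o), lam i := by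
          rw [← Finset.sum_fiberwise_of_maps_to
              (fun i hi => Finset.mem_image_of_mem m hi) lam]
          exact (Finset.add_sum_erase _ _ hmem).symm
        obtain ⟨B, hBo, hBP, hBint, hBsub, hfe⟩ := himg A hAP hAint (some A) hmem
        obtain rfl : A = B := Option.some_injective _ hBo
        have hrest : IsInt (∑ o ∈ (A.image m).erase (some A),
            ∑ i ∈ A.filter (fun i => m i = o), lam i) := by
          apply isInt_sum
          intro o ho
          obtain ⟨B, rfl, hBP, hBint, hBsub, hfe⟩ :=
            himg A hAP hAint o (Finset.mem_of_mem_erase ho)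
          rw [hfe]
          have hBne : B ≠ A := by
            intro h; exact (Finset.mem_erase.1 ho).1 (by rw [h])
          have hBss : B ⊂ A := Finset.ssubset_iff_subset_ne.2 ⟨hBsub, hBne⟩
          exact ih B (Nat.lt_succ_iff.1 (lt_of_lt_of_le (Finset.card_lt_card hBss) hcard))
            hBP hBint
        have : ∑ i ∈ tok A, lam i = (∑ i ∈ A, lam i)
            - ∑ o ∈ (A.image m).erase (some A),
                ∑ i ∈ A.filter (fun i => m i = o), lam i := by
          rw [← hfe]; rw [hsplit]; ring
        rw [this]
        exact isInt_sub hAint hrest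
      · have : tok A = ∅ := by
          rw [Finset.eq_empty_iff_forall_notMem]
          intro i hi
          have hmi : m i = some A := htokmem.1 hi
          have hiA : i ∈ A := htokA A hi
          exact hmem (Finset.mem_image.2 ⟨i, hiA, hmi⟩)
        rw [this]; exact ⟨0, by simp⟩
  have htokint' : ∀ A ∈ P, IsInt (∑ i ∈ A, lam i) → IsInt (∑ i ∈ tok A, lam i) :=
    fun A hAP hAint => htokint A.card A le_rfl hAP hAint
  refine ⟨((P.filter (fun A => IsInt (∑ i ∈ A, lam i))).image tok).filter
      (fun τ => τ.Nonempty ∧ ∀ i ∈ τ, ¬ IsInt (lam i)), ?_, ?_, ?_⟩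
  · -- pairwise disjoint
    intro τ₁ h₁ τ₂ h₂ hne
    obtain ⟨A₁, hA₁, rfl⟩ := Finset.mem_image.1 (Finset.mem_filter.1 h₁).1
    obtain ⟨A₂, hA₂, rfl⟩ := Finset.mem_image.1 (Finset.mem_filter.1 h₂).1
    rw [Finset.disjoint_left]
    intro i hi₁ hi₂
    have := (htokmem.1 hi₁).symm.trans (htokmem.1 hi₂)
    exact hne (by rw [Option.some_injective _ this])
  · -- size ≥ 2 and fractional
    intro τ hτ
    have hτ' := Finset.mem_filter.1 hτ
    obtain ⟨A, hA, rfl⟩ := Finset.mem_image.1 hτ'.1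
    have hA' := Finset.mem_filter.1 hA
    have hint : IsInt (∑ i ∈ tok A, lam i) := htokint' A hA'.1 hA'.2
    refine ⟨?_, hτ'.2.2⟩
    rcases Nat.lt_or_ge (tok A).card 2 with h2 | h2
    · exfalso
      have h1 : (tok A).card = 1 := by
        have := Finset.Nonempty.card_pos hτ'.2.1
        omega
      obtain ⟨i, hi⟩ := Finset.card_eq_one.1 h1
      apply hτ'.2.2 i (by rw [hi]; exact Finset.mem_singleton_self i)
      rw [hi] at hint
      simpa using hint
    · exact h2
  · -- constraints propagate
    intro d hd0 hdτ A hAP hAint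
    rw [← Finset.sum_fiberwise_of_maps_to (fun i hi => Finset.mem_image_of_mem m hi) d]
    apply Finset.sum_eq_zero
    intro o ho
    obtain ⟨B, rfl, hBP, hBint, hBsub, hfe⟩ := himg A hAP hAint o ho
    rw [hfe]
    by_cases hne : (tok B).Nonempty
    · by_cases hpure : ∀ i ∈ tok B, ¬ IsInt (lam i)
      · apply hdτ
        exact Finset.mem_filter.2 ⟨Finset.mem_image_of_mem tok
          (Finset.mem_filter.2 ⟨hBP, hBint⟩), hne, hpure⟩
      · push_neg at hpure
        obtain ⟨j, hj, hjint⟩ := hpure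
        have hjT : ({j} : Finset L) ∈ T j := by
          simp only [hT, Finset.mem_filter]
          exact ⟨hsing j, by simpa using hjint, Finset.mem_singleton_self j⟩
        have hmj : m j = some B := htokmem.1 hj
        have hBsubj : B ⊆ {j} := (hmem_m hmj).2 _ hjT
        have hjB : j ∈ B := (Finset.mem_filter.1 (hmem_m hmj).1).2.2
        have hBj : B = {j} := Finset.Subset.antisymm hBsubj (Finset.singleton_subset_iff.2 hjB)
        apply Finset.sum_eq_zero
        intro i hi
        have : i ∈ ({j} : Finset L) := hBj ▸ htokA B hi
        rw [Finset.mem_singleton.1 this]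
        exact hd0 j hjint
    · rw [Finset.not_nonempty_iff_eq_empty.1 hne]; simp


lemma exists_kernel (S₀ : Finset (Finset L)) (h : S₀.card < Fintype.card L) :
    ∃ d : L → ℝ, (∃ i, d i ≠ 0) ∧ ∀ τ ∈ S₀, ∑ i ∈ τ, d i = 0 := by
  classical
  set Φ : (L → ℝ) →ₗ[ℝ] (↥S₀ → ℝ) :=
    { toFun := fun d τ => ∑ i ∈ (τ : Finset L), d i
      map_add' := by
        intro x y; funext τ; simp [Finset.sum_add_distrib]
      map_smul' := by
        intro c x; funext τ; simp [Finset.mul_sum] } with hΦ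
  have hker : LinearMap.ker Φ ≠ ⊥ := by
    intro hk
    have h1 := LinearMap.finrank_range_add_finrank_ker Φ
    rw [hk, finrank_bot, add_zero] at h1
    have h2 : Module.finrank ℝ (LinearMap.range Φ) ≤ Module.finrank ℝ (↥S₀ → ℝ) :=
      Submodule.finrank_le _
    rw [h1] at h2
    rw [Module.finrank_fintype_fun_eq_card, Module.finrank_fintype_fun_eq_card,
      Fintype.card_coe] at h2
    omega
  obtain ⟨d, hd, hdne⟩ := (Submodule.ne_bot_iff _).1 hker
  refine ⟨d, ?_, ?_⟩
  · by_contra hc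
    push_neg at hc
    exact hdne (funext hc)
  · intro τ hτ
    have := LinearMap.mem_ker.1 hd
    have := congrFun this ⟨τ, hτ⟩
    simpa [hΦ] using this

lemma exists_direction (M N : Finset (Finset L))
    (hMsing : ∀ i : L, {i} ∈ M) (hNsing : ∀ i : L, {i} ∈ N)
    (hMlam : ∀ A ∈ M, ∀ B ∈ M, Disjoint A B ∨ A ⊆ B ∨ B ⊆ A)
    (hNlam : ∀ A ∈ N, ∀ B ∈ N, Disjoint A B ∨ A ⊆ B ∨ B ⊆ A)
    (lam : L → ℝ) (hF : ∃ i, ¬ IsInt (lam i)) :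
    ∃ d : L → ℝ, (∃ i, d i ≠ 0) ∧
      ∀ A : Finset L, (A ∈ M ∨ A ∈ N) → IsInt (∑ i ∈ A, lam i) →
        ∑ i ∈ A, d i = 0 := by
  classical
  obtain ⟨BM, hBMd, hBMc, hBMp⟩ := exists_blocks M hMsing hMlam lam
  obtain ⟨BN, hBNd, hBNc, hBNp⟩ := exists_blocks N hNsing hNlam lam
  set F : Finset L := univ.filter (fun i => ¬ IsInt (lam i)) with hFdef
  set G : Finset L := univ.filter (fun i => IsInt (lam i)) with hGdef
  have hGF : G.card + F.card = Fintype.card L := by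
    rw [hGdef, hFdef, Finset.card_filter_add_card_filter_not]
    exact Finset.card_univ
  have hFne : F.Nonempty := by
    obtain ⟨i, hi⟩ := hF
    exact ⟨i, by simp [hFdef, hi]⟩
  set Ssing : Finset (Finset L) := G.image (fun j => ({j} : Finset L)) with hSsing
  set S : Finset (Finset L) := Ssing ∪ (BM ∪ BN) with hSdef
  have hBM_S : ∀ τ ∈ BM, τ ∈ S := by
    intro τ hτ; rw [hSdef]
    exact Finset.mem_union_right _ (Finset.mem_union_left _ hτ)
  have hBN_S : ∀ τ ∈ BN, τ ∈ S := by
    intro τ hτ; rw [hSdef]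
    exact Finset.mem_union_right _ (Finset.mem_union_right _ hτ)
  have hsubF : ∀ {B : Finset (Finset L)},
      (∀ τ ∈ B, 2 ≤ τ.card ∧ ∀ i ∈ τ, ¬ IsInt (lam i)) → ∀ τ ∈ B, τ ⊆ F := by
    intro B hB τ hτ i hi
    simp only [hFdef, Finset.mem_filter]
    exact ⟨Finset.mem_univ i, (hB τ hτ).2 i hi⟩
  have hcount : ∀ (B : Finset (Finset L)),
      (∀ τ₁ ∈ B, ∀ τ₂ ∈ B, τ₁ ≠ τ₂ → Disjoint τ₁ τ₂) →
      (∀ τ ∈ B, 2 ≤ τ.card ∧ ∀ i ∈ τ, ¬ IsInt (lam i)) →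
      2 * B.card ≤ (B.biUnion (fun τ => τ)).card ∧ (B.biUnion (fun τ => τ)) ⊆ F := by
    intro B hd hc
    constructor
    · rw [Finset.card_biUnion (fun x hx y hy hxy => hd x hx y hy hxy)]
      calc 2 * B.card = ∑ _τ ∈ B, 2 := by rw [Finset.sum_const]; ring
        _ ≤ ∑ τ ∈ B, τ.card := Finset.sum_le_sum (fun τ hτ => (hc τ hτ).1)
    · intro i hi
      obtain ⟨τ, hτ, hiτ⟩ := Finset.mem_biUnion.1 hi
      exact hsubF hc τ hτ hiτ
  have hBMle : 2 * BM.card ≤ F.card :=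
    le_trans (hcount BM hBMd hBMc).1 (Finset.card_le_card (hcount BM hBMd hBMc).2)
  have hBNle : 2 * BN.card ≤ F.card :=
    le_trans (hcount BN hBNd hBNc).1 (Finset.card_le_card (hcount BN hBNd hBNc).2)
  have hSsingcard : Ssing.card = G.card := Finset.card_image_of_injective _
    (fun a b hab => Finset.singleton_injective hab)
  have hSsingdisj : Disjoint Ssing (BM ∪ BN) := by
    rw [Finset.disjoint_left]
    intro τ hτ hτ'
    obtain ⟨j, _, rfl⟩ := Finset.mem_image.1 hτ
    rcases Finset.mem_union.1 hτ' with h | h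
    · have := (hBMc _ h).1; simp at this
    · have := (hBNc _ h).1; simp at this
  have hScard : S.card = G.card + (BM ∪ BN).card := by
    rw [hSdef, Finset.card_union_of_disjoint hSsingdisj, hSsingcard]
  -- find a nonzero kernel vector of the constraints indexed by S
  have main : ∃ d : L → ℝ, (∃ i, d i ≠ 0) ∧ ∀ τ ∈ S, ∑ i ∈ τ, d i = 0 := by
    by_cases hcase : (BM ∪ BN).card < F.card
    · exact exists_kernel S (by omega)
    · push_neg at hcase
      have hle : (BM ∪ BN).card ≤ BM.card + BN.card := Finset.card_union_le _ _
      have heq : (BM ∪ BN).card = F.card := by omega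
      have heq2 : BM.card + BN.card = F.card := by omega
      have hdisjMN : Disjoint BM BN := by
        have h3 := Finset.card_union_add_card_inter BM BN
        rw [heq] at h3
        have h4 : (BM ∩ BN).card = 0 := by omega
        rw [Finset.card_eq_zero] at h4
        exact Finset.disjoint_iff_inter_eq_empty.2 h4
      have hcover : ∀ (B : Finset (Finset L)),
          (∀ τ₁ ∈ B, ∀ τ₂ ∈ B, τ₁ ≠ τ₂ → Disjoint τ₁ τ₂) →
          (∀ τ ∈ B, 2 ≤ τ.card ∧ ∀ i ∈ τ, ¬ IsInt (lam i)) →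
          2 * B.card = F.card →
          B.biUnion (fun τ => τ) = F := by
        intro B hd hc h2
        have h1 := (hcount B hd hc).1
        have h2' := (hcount B hd hc).2
        have := Finset.card_le_card h2'
        apply Finset.eq_of_subset_of_card_le h2'
        omega
      have h2BM : 2 * BM.card = F.card := by omega
      have h2BN : 2 * BN.card = F.card := by omega
      have hcovM := hcover BM hBMd hBMc h2BM
      have hcovN := hcover BN hBNd hBNc h2BN
      have hBNne : BN.Nonempty := by
        rcases Finset.eq_empty_or_nonempty BN with h | h
        · exfalso; rw [h] at hcovN; simp at hcovN
          exact Finset.Nonempty.ne_empty hFne hcovN.symm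
        · exact h
      obtain ⟨τ₀, hτ₀⟩ := hBNne
      have hτ₀S : τ₀ ∈ S := hBN_S τ₀ hτ₀
      have hτ₀BM : τ₀ ∉ BM := Finset.disjoint_right.1 hdisjMN hτ₀
      have hScard' : S.card = Fintype.card L := by omega
      have hcardlt : (S.erase τ₀).card < Fintype.card L := by
        rw [Finset.card_erase_of_mem hτ₀S]
        have : 1 ≤ S.card := Finset.card_pos.2 ⟨τ₀, hτ₀S⟩
        omega
      obtain ⟨d, hdne, hdc⟩ := exists_kernel (S.erase τ₀) hcardlt
      refine ⟨d, hdne, ?_⟩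
      intro τ hτ
      by_cases hττ₀ : τ = τ₀
      · -- derived constraint
        rw [hττ₀]
        have hsumB : ∀ (B : Finset (Finset L)),
            (∀ τ₁ ∈ B, ∀ τ₂ ∈ B, τ₁ ≠ τ₂ → Disjoint τ₁ τ₂) →
            B.biUnion (fun τ => τ) = F →
            ∑ σ ∈ B, ∑ i ∈ σ, d i = ∑ i ∈ F, d i := by
          intro B hd' hcov
          rw [← hcov, Finset.sum_biUnion]
          exact fun x hx y hy hxy => hd' x hx y hy hxy
        have hM0 : ∑ i ∈ F, d i = 0 := by
          rw [← hsumB BM hBMd hcovM]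
          apply Finset.sum_eq_zero
          intro σ hσ
          exact hdc σ (Finset.mem_erase.2 ⟨fun h => hτ₀BM (h ▸ hσ), hBM_S σ hσ⟩)
        have hN : ∑ σ ∈ BN, ∑ i ∈ σ, d i = ∑ i ∈ F, d i := hsumB BN hBNd hcovN
        rw [← Finset.add_sum_erase _ _ hτ₀] at hN
        have hNrest : ∑ σ ∈ BN.erase τ₀, ∑ i ∈ σ, d i = 0 := by
          apply Finset.sum_eq_zero
          intro σ hσ
          exact hdc σ (Finset.mem_erase.2 ⟨(Finset.mem_erase.1 hσ).1,
            hBN_S σ (Finset.mem_of_mem_erase hσ)⟩)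
        rw [hNrest, add_zero, hM0] at hN
        exact hN
      · exact hdc τ (Finset.mem_erase.2 ⟨hττ₀, hτ⟩)
  obtain ⟨d, hdne, hdS⟩ := main
  have hd0 : ∀ j, IsInt (lam j) → d j = 0 := by
    intro j hj
    have hjS : ({j} : Finset L) ∈ S := by
      rw [hSdef]
      exact Finset.mem_union_left _ (Finset.mem_image_of_mem _
        (by simp [hGdef, hj]))
    have := hdS _ hjS
    simpa using this
  refine ⟨d, hdne, ?_⟩
  intro A hA hAint
  rcases hA with h | h
  · exact hBMp d hd0 (fun τ hτ => hdS τ (hBM_S τ hτ)) A h hAint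
  · exact hBNp d hd0 (fun τ hτ => hdS τ (hBN_S τ hτ)) A h hAint

lemma floor_lt_of_not_isInt {x : ℝ} (h : ¬ IsInt x) : ((⌊x⌋ : ℝ) < x) :=
  lt_of_le_of_ne (Int.floor_le x) (fun he => h ⟨⌊x⌋, he.symm⟩)

lemma lt_ceil_of_not_isInt {x : ℝ} (h : ¬ IsInt x) : (x < (⌈x⌉ : ℝ)) :=
  lt_of_lt_of_le' (lt_of_le_of_ne (Int.le_ceil x) (fun he => h ⟨⌈x⌉, he⟩)) le_rfl

lemma transfer {w v : ℝ} (h1 : (⌊w⌋ : ℝ) ≤ v) (h2 : v ≤ (⌈w⌉ : ℝ)) (z : ℤ)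
    (hz : z = ⌊v⌋ ∨ z = ⌈v⌉) : z = ⌊w⌋ ∨ z = ⌈w⌉ := by
  by_cases hw : IsInt w
  · obtain ⟨k, rfl⟩ := hw
    rw [Int.floor_intCast] at h1
    rw [Int.ceil_intCast] at h2
    have hv : v = (k : ℝ) := le_antisymm h2 h1
    subst hv
    rw [Int.floor_intCast, Int.ceil_intCast] at hz
    rcases hz with h | h
    · exact Or.inl (by rw [h, Int.floor_intCast])
    · exact Or.inl (by rw [h, Int.floor_intCast])
  · have hceil : ⌈w⌉ = ⌊w⌋ + 1 := by
      have h1' := Int.ceil_le_floor_add_one w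
      have hf : (⌊w⌋ : ℝ) < w := floor_lt_of_not_isInt hw
      have h2' : (⌊w⌋ : ℝ) < (⌈w⌉ : ℝ) := lt_of_lt_of_le hf (Int.le_ceil w)
      have h3 : ⌊w⌋ < ⌈w⌉ := by exact_mod_cast h2'
      omega
    set n := ⌊w⌋ with hn
    have hfl : n ≤ ⌊v⌋ := Int.le_floor.2 h1
    have h2' : v ≤ ((n + 1 : ℤ) : ℝ) := by rw [hceil] at h2; exact_mod_cast h2
    have hfu : ⌊v⌋ ≤ n + 1 := by
      calc ⌊v⌋ ≤ ⌊((n + 1 : ℤ) : ℝ)⌋ := Int.floor_le_floor h2'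
        _ = n + 1 := Int.floor_intCast _
    have hcl : n ≤ ⌈v⌉ := le_trans hfl (Int.floor_le_ceil v)
    have hcu : ⌈v⌉ ≤ n + 1 := Int.ceil_le.2 h2'
    rcases hz with h | h
    · have hzn : z = n ∨ z = n + 1 := by omega
      rcases hzn with h' | h'
      · exact Or.inl h'
      · exact Or.inr (by rw [h', hceil])
    · have hzn : z = n ∨ z = n + 1 := by omega
      rcases hzn with h' | h'
      · exact Or.inl h'
      · exact Or.inr (by rw [h', hceil])

lemma all_int_case (M N : Finset (Finset L)) (lam : L → ℝ)
    (h : ∀ i, IsInt (lam i)) :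
    ∃ ℓ : L → ℤ, ∀ A ∈ M ∪ N,
      ((∑ i ∈ A, ℓ i) = ⌊∑ i ∈ A, lam i⌋ ∨ (∑ i ∈ A, ℓ i) = ⌈∑ i ∈ A, lam i⌉) := by
  refine ⟨fun i => ⌊lam i⌋, fun A _ => Or.inl ?_⟩
  have hA : ∑ i ∈ A, lam i = (((∑ i ∈ A, ⌊lam i⌋) : ℤ) : ℝ) := by
    push_cast
    apply Finset.sum_congr rfl
    intro i _
    obtain ⟨z, hz⟩ := h i
    rw [hz, Int.floor_intCast]
  rw [hA, Int.floor_intCast]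

lemma main_aux (M N : Finset (Finset L))
    (hMsing : ∀ i : L, {i} ∈ M) (hNsing : ∀ i : L, {i} ∈ N)
    (hMlam : ∀ A ∈ M, ∀ B ∈ M, Disjoint A B ∨ A ⊆ B ∨ B ⊆ A)
    (hNlam : ∀ A ∈ N, ∀ B ∈ N, Disjoint A B ∨ A ⊆ B ∨ B ⊆ A) :
    ∀ k : ℕ, ∀ lam : L → ℝ,
      (((M ∪ N).filter (fun A => ¬ IsInt (∑ i ∈ A, lam i))).card ≤ k) →
      ∃ ℓ : L → ℤ, ∀ A ∈ M ∪ N,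
        ((∑ i ∈ A, ℓ i) = ⌊∑ i ∈ A, lam i⌋ ∨ (∑ i ∈ A, ℓ i) = ⌈∑ i ∈ A, lam i⌉) := by
  intro k
  induction k with
  | zero =>
    intro lam hcard
    apply all_int_case
    intro i
    have hempty : ((M ∪ N).filter (fun A => ¬ IsInt (∑ i ∈ A, lam i))) = ∅ :=
      Finset.card_eq_zero.1 (Nat.le_zero.1 hcard)
    by_contra hcon
    have hmem : ({i} : Finset L) ∈ (M ∪ N).filter (fun A => ¬ IsInt (∑ i ∈ A, lam i)) := by
      refine Finset.mem_filter.2 ⟨Finset.mem_union_left _ (hMsing i), ?_⟩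
      simpa using hcon
    rw [hempty] at hmem
    simp at hmem
  | succ k ih =>
    intro lam hcard
    by_cases hallint : ∀ i, IsInt (lam i)
    · exact all_int_case M N lam hallint
    · push_neg at hallint
      obtain ⟨d, ⟨i₀, hi₀⟩, hdir⟩ := exists_direction M N hMsing hNsing hMlam hNlam lam hallint
      have hdir' : ∀ A ∈ M ∪ N, IsInt (∑ i ∈ A, lam i) → ∑ i ∈ A, d i = 0 := by
        intro A hA hint
        rcases Finset.mem_union.1 hA with h | h
        · exact hdir A (Or.inl h) hint
        · exact hdir A (Or.inr h) hint
      set bad := (M ∪ N).filter (fun A => ¬ IsInt (∑ i ∈ A, lam i)) with hbad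
      set Td := bad.filter (fun A => ∑ i ∈ A, d i ≠ 0) with hTd
      have hi₀MN : ({i₀} : Finset L) ∈ M ∪ N := Finset.mem_union_left _ (hMsing i₀)
      have hi₀Td : ({i₀} : Finset L) ∈ Td := by
        refine Finset.mem_filter.2 ⟨Finset.mem_filter.2 ⟨hi₀MN, ?_⟩, by simpa using hi₀⟩
        intro hint
        exact hi₀ (by simpa using hdir' _ hi₀MN hint)
      have hTdne : Td.Nonempty := ⟨_, hi₀Td⟩
      set tf : Finset L → ℝ := fun A =>
        if 0 < ∑ i ∈ A, d i
          then ((⌈∑ i ∈ A, lam i⌉ : ℝ) - ∑ i ∈ A, lam i) / (∑ i ∈ A, d i)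
          else ((⌊∑ i ∈ A, lam i⌋ : ℝ) - ∑ i ∈ A, lam i) / (∑ i ∈ A, d i) with htf
      have htfpos : ∀ A ∈ Td, 0 < tf A := by
        intro A hA
        have hAbad : A ∈ bad := (Finset.mem_filter.1 hA).1
        have hnint : ¬ IsInt (∑ i ∈ A, lam i) := (Finset.mem_filter.1 hAbad).2
        have hdne : (∑ i ∈ A, d i) ≠ 0 := (Finset.mem_filter.1 hA).2
        simp only [htf]
        by_cases hpos : 0 < ∑ i ∈ A, d i
        · rw [if_pos hpos]
          apply div_pos _ hpos
          have := lt_ceil_of_not_isInt hnint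
          linarith
        · rw [if_neg hpos]
          have hneg : (∑ i ∈ A, d i) < 0 := lt_of_le_of_ne (not_lt.1 hpos) hdne
          apply div_pos_of_neg_of_neg _ hneg
          have := floor_lt_of_not_isInt hnint
          linarith
      have hTdimne : (Td.image tf).Nonempty := hTdne.image tf
      set tstar := (Td.image tf).min' hTdimne with htstar
      obtain ⟨Astar, hAstarTd, hAstareq⟩ :=
        Finset.mem_image.1 ((Td.image tf).min'_mem hTdimne)
      rw [← htstar] at hAstareq
      have htstarpos : 0 < tstar := by
        rw [← hAstareq]
        exact htfpos _ hAstarTd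
      have htstarle : ∀ A ∈ Td, tstar ≤ tf A := by
        intro A hA
        exact (Td.image tf).min'_le _ (Finset.mem_image_of_mem tf hA)
      set lam' : L → ℝ := fun i => lam i + tstar * d i with hlam'
      have hsum' : ∀ A : Finset L,
          ∑ i ∈ A, lam' i = (∑ i ∈ A, lam i) + tstar * ∑ i ∈ A, d i := by
        intro A
        rw [hlam']
        rw [Finset.sum_add_distrib, Finset.mul_sum]
      have hpreserve : ∀ A ∈ M ∪ N, IsInt (∑ i ∈ A, lam i) →
          ∑ i ∈ A, lam' i = ∑ i ∈ A, lam i := by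
        intro A hA hint
        rw [hsum', hdir' A hA hint, mul_zero, add_zero]
      have hbounds : ∀ A ∈ M ∪ N,
          ((⌊∑ i ∈ A, lam i⌋ : ℝ) ≤ ∑ i ∈ A, lam' i) ∧
          (∑ i ∈ A, lam' i ≤ (⌈∑ i ∈ A, lam i⌉ : ℝ)) := by
        intro A hA
        by_cases hint : IsInt (∑ i ∈ A, lam i)
        · rw [hpreserve A hA hint]
          exact ⟨Int.floor_le _, Int.le_ceil _⟩
        · by_cases hd0 : (∑ i ∈ A, d i) = 0
          · rw [hsum', hd0, mul_zero, add_zero]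
            exact ⟨Int.floor_le _, Int.le_ceil _⟩
          · have hATd : A ∈ Td := Finset.mem_filter.2
              ⟨Finset.mem_filter.2 ⟨hA, hint⟩, hd0⟩
            have hle := htstarle A hATd
            rw [hsum']
            by_cases hpos : 0 < ∑ i ∈ A, d i
            · constructor
              · have hnn : 0 ≤ tstar * ∑ i ∈ A, d i :=
                  mul_nonneg (le_of_lt htstarpos) (le_of_lt hpos)
                have := Int.floor_le (∑ i ∈ A, lam i)
                linarith
              · have hmul : tstar * ∑ i ∈ A, d i ≤ tf A * ∑ i ∈ A, d i :=
                  mul_le_mul_of_nonneg_right hle (le_of_lt hpos)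
                have hcancel : tf A * ∑ i ∈ A, d i
                    = (⌈∑ i ∈ A, lam i⌉ : ℝ) - ∑ i ∈ A, lam i := by
                  simp only [htf, if_pos hpos]
                  rw [div_mul_cancel₀]
                  exact hd0
                linarith
            · have hneg : (∑ i ∈ A, d i) < 0 := lt_of_le_of_ne (not_lt.1 hpos) hd0
              constructor
              · have hmul : tf A * ∑ i ∈ A, d i ≤ tstar * ∑ i ∈ A, d i :=
                  mul_le_mul_of_nonpos_right hle (le_of_lt hneg)
                have hcancel : tf A * ∑ i ∈ A, d i
                    = (⌊∑ i ∈ A, lam i⌋ : ℝ) - ∑ i ∈ A, lam i := by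
                  simp only [htf, if_neg hpos]
                  rw [div_mul_cancel₀]
                  exact hd0
                linarith
              · have hnp : tstar * ∑ i ∈ A, d i ≤ 0 :=
                  mul_nonpos_of_nonneg_of_nonpos (le_of_lt htstarpos) (le_of_lt hneg)
                have := Int.le_ceil (∑ i ∈ A, lam i)
                linarith
      have hAstarMN : Astar ∈ M ∪ N :=
        (Finset.mem_filter.1 (Finset.mem_filter.1 hAstarTd).1).1
      have hAstard : (∑ i ∈ Astar, d i) ≠ 0 := (Finset.mem_filter.1 hAstarTd).2
      have hAstarint : IsInt (∑ i ∈ Astar, lam' i) := by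
        rw [hsum', ← hAstareq]
        simp only [htf]
        by_cases hpos : 0 < ∑ i ∈ Astar, d i
        · rw [if_pos hpos, div_mul_cancel₀ _ hAstard]
          exact ⟨⌈∑ i ∈ Astar, lam i⌉, by ring⟩
        · rw [if_neg hpos, div_mul_cancel₀ _ hAstard]
          exact ⟨⌊∑ i ∈ Astar, lam i⌋, by ring⟩
      have hbadsub : (M ∪ N).filter (fun A => ¬ IsInt (∑ i ∈ A, lam' i))
          ⊆ bad.erase Astar := by
        intro A hA
        have hAMN := (Finset.mem_filter.1 hA).1
        have hAnint' := (Finset.mem_filter.1 hA).2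
        apply Finset.mem_erase.2
        constructor
        · intro he
          rw [he] at hAnint'
          exact hAnint' hAstarint
        · refine Finset.mem_filter.2 ⟨hAMN, ?_⟩
          intro hint
          apply hAnint'
          rw [hpreserve A hAMN hint]
          exact hint
      have hAstarbad : Astar ∈ bad := (Finset.mem_filter.1 hAstarTd).1
      have hcard' : ((M ∪ N).filter (fun A => ¬ IsInt (∑ i ∈ A, lam' i))).card ≤ k := by
        have h1 := Finset.card_le_card hbadsub
        have h2 : (bad.erase Astar).card = bad.card - 1 :=
          Finset.card_erase_of_mem hAstarbad
        have h3 : 1 ≤ bad.card := Finset.card_pos.2 ⟨Astar, hAstarbad⟩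
        omega
      obtain ⟨ℓ, hℓ⟩ := ih lam' hcard'
      refine ⟨ℓ, fun A hA => ?_⟩
      exact transfer (hbounds A hA).1 (hbounds A hA).2 _ (hℓ A hA)

end RoundingAux

open Finset

/-- A multipartition of a finite set (type) `L`: a family of subsets containing the
whole set and all singletons, in which any two members are disjoint or nested. -/
def IsMultipartition {L : Type*} [Fintype L] [DecidableEq L] (M : Finset (Finset L)) : Prop :=
  (Finset.univ ∈ M) ∧ (∀ i : L, {i} ∈ M) ∧
    (∀ A ∈ M, ∀ B ∈ M, Disjoint A B ∨ A ⊆ B ∨ B ⊆ A)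

/-- rounding feasibility: given two multipartitions `M`, `N` of `L` and reals
`λ i`, there are integers `ℓ i ∈ {⌊λ i⌋, ⌈λ i⌉}` whose sum over every member of `M` and of `N`
is the floor or ceiling of the corresponding real sum. -/
theorem rounding_feasibility {L : Type*} [Fintype L] [DecidableEq L]
    (M N : Finset (Finset L)) (hM : IsMultipartition M) (hN : IsMultipartition N)
    (lam : L → ℝ) :
    ∃ ℓ : L → ℤ,
      (∀ i : L, ℓ i = ⌊lam i⌋ ∨ ℓ i = ⌈lam i⌉) ∧
      (∀ A : Finset L, (A ∈ M ∨ A ∈ N) →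
        (∑ i ∈ A, ℓ i = ⌊∑ i ∈ A, lam i⌋ ∨ ∑ i ∈ A, ℓ i = ⌈∑ i ∈ A, lam i⌉)) := by
  classical
  obtain ⟨hMuniv, hMsing, hMlam⟩ := hM
  obtain ⟨hNuniv, hNsing, hNlam⟩ := hN
  obtain ⟨ℓ, hℓ⟩ := RoundingAux.main_aux M N hMsing hNsing hMlam hNlam
    (((M ∪ N).filter (fun A => ¬ RoundingAux.IsInt (∑ i ∈ A, lam i))).card) lam le_rfl
  refine ⟨ℓ, ?_, ?_⟩
  · intro i
    have h := hℓ {i} (Finset.mem_union_left _ (hMsing i))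
    simpa using h
  · intro A hA
    rcases hA with h | h
    · exact hℓ A (Finset.mem_union_left _ h)
    · exact hℓ A (Finset.mem_union_right _ h)
end

section
/- Let A be a finite set with |A| ≥ tk/δ, and let (A_1, ..., A_k) be a partition of A into k sets. Then there exists a probability distribution over subsets B ⊆ A satisfying: (1) with probability 1, either |B| = t or B = ∅; (2) with probability 1, B is fully contained in a single A_i; (3) for every a ∈ A, Pr[a ∈ B] ≤ t/|A|; (4) Pr[B = ∅] ≤ δ. -/
open Finset

lemma exists_blocks {α : Type*} [DecidableEq α] (t : ℕ) (ht : 0 < t) (S : Finset α) :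
    ∃ F : Finset (Finset α), (∀ B ∈ F, B ⊆ S) ∧ (∀ B ∈ F, B.card = t) ∧
      ((F : Set (Finset α)).PairwiseDisjoint id) ∧ F.card = S.card / t := by
  induction S using Finset.strongInduction with
  | _ S ih =>
    by_cases h : S.card < t
    · exact ⟨∅, by simp, by simp, by simp, by simp [Nat.div_eq_of_lt h]⟩
    · push_neg at h
      obtain ⟨B, hBS, hBcard⟩ := Finset.exists_subset_card_eq h
      have hBne : B.Nonempty := Finset.card_pos.mp (hBcard ▸ ht)
      have hssub : S \ B ⊂ S := Finset.sdiff_ssubset hBS hBne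
      obtain ⟨F', h1, h2, h3, h4⟩ := ih _ hssub
      have key : ∀ E ∈ F', Disjoint B E := fun E hE =>
        Finset.disjoint_left.mpr fun a haB haE => (Finset.mem_sdiff.mp (h1 E hE haE)).2 haB
      have hBnotin : B ∉ F' := by
        intro hB
        obtain ⟨a, ha⟩ := hBne
        exact (Finset.mem_sdiff.mp (h1 B hB ha)).2 ha
      refine ⟨insert B F', ?_, ?_, ?_, ?_⟩
      · intro C hC
        rcases Finset.mem_insert.mp hC with rfl | hC
        · exact hBS
        · exact (h1 C hC).trans Finset.sdiff_subset
      · intro C hC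
        rcases Finset.mem_insert.mp hC with rfl | hC
        · exact hBcard
        · exact h2 C hC
      · intro C hC D hD hCD
        simp only [coe_insert, Set.mem_insert_iff, mem_coe] at hC hD
        rcases hC with rfl | hC <;> rcases hD with rfl | hD
        · exact absurd rfl hCD
        · exact key D hD
        · exact (key C hC).symm
        · exact h3 hC hD hCD
      · rw [Finset.card_insert_of_notMem hBnotin, h4, Finset.card_sdiff_of_subset hBS, hBcard,
          Nat.div_eq_sub_div ht h]

/-- Observation on random picks: if `A` is a finite set with
`|A| ≥ t·k/δ` partitioned into sets `A_1, …, A_k`, then there is a probability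
distribution over subsets `B ⊆ A` such that almost surely `|B| = t` or `B = ∅`,
almost surely `B` lies inside a single part, each element is included with
probability at most `t/|A|`, and `Pr[B = ∅] ≤ δ`. -/
theorem random_pick_exists {α : Type*} [Fintype α] [DecidableEq α]
    (t k : ℕ) (δ : ℝ) (ht : 0 < t) (hk : 0 < k) (hδ0 : 0 < δ) (hδ1 : δ ≤ 1)
    (A : Finset α) (parts : Fin k → Finset α)
    (hdisj : ∀ i j, i ≠ j → Disjoint (parts i) (parts j))
    (hcover : A = Finset.univ.biUnion (fun i => parts i))
    (hsize : (t * k : ℝ) / δ ≤ A.card) :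
    ∃ p : Finset α → ℝ,
      (∀ B, 0 ≤ p B) ∧
      (∑ B : Finset α, p B = 1) ∧
      (∀ B, p B ≠ 0 → B ⊆ A) ∧
      (∀ B, p B ≠ 0 → B.card = t ∨ B = ∅) ∧
      (∀ B, p B ≠ 0 → B ≠ ∅ → ∃ i, B ⊆ parts i) ∧
      (∀ a ∈ A, ∑ B : Finset α, (if a ∈ B then p B else 0) ≤ (t : ℝ) / A.card) ∧
      p ∅ ≤ δ := by
  classical
  choose F hF1 hF2 hF3 hF4 using fun i => exists_blocks t ht (parts i)
  set G : Finset (Finset α) := Finset.univ.biUnion F with hGdef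
  have hGmem : ∀ B ∈ G, ∃ i, B ∈ F i := by
    intro B hB
    obtain ⟨i, _, hi⟩ := Finset.mem_biUnion.mp hB
    exact ⟨i, hi⟩
  have hGsub : ∀ B ∈ G, ∃ i, B ⊆ parts i := by
    intro B hB; obtain ⟨i, hi⟩ := hGmem B hB; exact ⟨i, hF1 i B hi⟩
  have hGcardt : ∀ B ∈ G, B.card = t := by
    intro B hB; obtain ⟨i, hi⟩ := hGmem B hB; exact hF2 i B hi
  have hGne : ∀ B ∈ G, B ≠ ∅ := by
    intro B hB h
    have := hGcardt B hB
    rw [h] at this; simp at this; omega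
  have hpartsub : ∀ i, parts i ⊆ A := by
    intro i; rw [hcover]
    exact Finset.subset_biUnion_of_mem _ (Finset.mem_univ i)
  have hGsubA : ∀ B ∈ G, B ⊆ A := by
    intro B hB; obtain ⟨i, hi⟩ := hGsub B hB; exact hi.trans (hpartsub i)
  have hGdisj : ∀ B ∈ G, ∀ C ∈ G, B ≠ C → Disjoint B C := by
    intro B hB C hC hBC
    obtain ⟨i, hi⟩ := hGmem B hB
    obtain ⟨j, hj⟩ := hGmem C hC
    by_cases hij : i = j
    · subst hij
      exact hF3 i (Finset.mem_coe.mpr hi) (Finset.mem_coe.mpr hj) hBC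
    · exact Finset.disjoint_of_subset_left (hF1 i B hi)
        (Finset.disjoint_of_subset_right (hF1 j C hj) (hdisj i j hij))
  -- N * t ≤ |A|
  have hNt : G.card * t ≤ A.card := by
    have hdd : ∀ B ∈ G, ∀ C ∈ G, B ≠ C → Disjoint (id B) (id C) := hGdisj
    have h1 : (G.biUnion id).card = ∑ B ∈ G, B.card := Finset.card_biUnion hdd
    have h2 : G.biUnion id ⊆ A := by
      intro a ha
      obtain ⟨B, hB, haB⟩ := Finset.mem_biUnion.mp ha
      exact hGsubA B hB haB
    calc G.card * t = ∑ B ∈ G, B.card := by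
          rw [Finset.sum_congr rfl hGcardt, Finset.sum_const, smul_eq_mul]
      _ = (G.biUnion id).card := h1.symm
      _ ≤ A.card := Finset.card_le_card h2
  -- |A| ≤ N*t + k*t
  have hAsum : A.card = ∑ i, (parts i).card := by
    rw [hcover]
    exact Finset.card_biUnion (fun i _ j _ h => hdisj i j h)
  have hGcard : G.card = ∑ i, (F i).card := by
    rw [hGdef]
    apply Finset.card_biUnion
    intro i _ j _ hij
    rw [Function.onFun, Finset.disjoint_left]
    intro B hBi hBj
    have hBne : B.Nonempty := Finset.card_pos.mp ((hF2 i B hBi) ▸ ht)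
    obtain ⟨a, ha⟩ := hBne
    exact Finset.disjoint_left.mp (hdisj i j hij) (hF1 i B hBi ha) (hF1 j B hBj ha)
  have hup : A.card ≤ G.card * t + k * t := by
    rw [hAsum, hGcard, Finset.sum_mul]
    have : ∀ i : Fin k, (parts i).card ≤ (F i).card * t + t := by
      intro i
      rw [hF4 i]
      have h1 := Nat.div_add_mod' (parts i).card t
      have h2 := Nat.mod_lt (parts i).card ht
      omega
    calc ∑ i, (parts i).card ≤ ∑ i : Fin k, ((F i).card * t + t) := Finset.sum_le_sum (fun i _ => this i)
      _ = (∑ i, (F i).card * t) + k * t := by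
          rw [Finset.sum_add_distrib, Finset.sum_const, Finset.card_univ, Fintype.card_fin, smul_eq_mul]
  -- real inequalities
  have htk1 : (1 : ℝ) ≤ (t : ℝ) * k := by
    have : 1 ≤ t * k := Nat.one_le_iff_ne_zero.mpr (Nat.mul_ne_zero ht.ne' hk.ne')
    exact_mod_cast this
  have hA0 : (0 : ℝ) < A.card := by
    have h1 : ((t : ℝ) * k) ≤ (t * k : ℝ) / δ := le_div_self (by linarith) hδ0 hδ1
    linarith
  have hktδ : (t : ℝ) * k ≤ δ * A.card := by
    rw [div_le_iff₀ hδ0] at hsize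
    linarith
  set c : ℝ := (t : ℝ) / A.card with hcdef
  have hc0 : 0 ≤ c := div_nonneg (by positivity) hA0.le
  set q : ℝ := 1 - G.card * c with hqdef
  have hNtR : (G.card : ℝ) * t ≤ A.card := by exact_mod_cast hNt
  have hq0 : 0 ≤ q := by
    rw [hqdef, hcdef]
    have : (G.card : ℝ) * ((t : ℝ) / A.card) ≤ 1 := by
      rw [mul_div_assoc'] at *
      rw [div_le_one hA0]
      exact hNtR
    linarith
  have hemptyG : ∅ ∉ G := fun h => hGne ∅ h rfl
  refine ⟨fun B => if B ∈ G then c else if B = ∅ then q else 0, ?_, ?_, ?_, ?_, ?_, ?_, ?_⟩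
  · intro B
    dsimp only
    split_ifs <;> simp [hc0, hq0]
  · have heq : ∀ B : Finset α, (if B ∈ G then c else if B = ∅ then q else 0) =
        (if B ∈ G then c else 0) + (if B = ∅ then q else 0) := by
      intro B
      by_cases h1 : B ∈ G
      · have : B ≠ ∅ := hGne B h1
        simp [h1, this]
      · simp [h1]
    rw [Finset.sum_congr rfl (fun B _ => heq B), Finset.sum_add_distrib]
    rw [Finset.sum_ite_mem, Finset.univ_inter, Finset.sum_const, nsmul_eq_mul]
    rw [Finset.sum_ite_eq' Finset.univ (∅ : Finset α) (fun _ => q)]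
    simp [hqdef]
  · intro B hB
    dsimp only at hB
    split_ifs at hB with h1 h2
    · exact hGsubA B h1
    · rw [h2]; exact Finset.empty_subset A
    · exact absurd rfl hB
  · intro B hB
    dsimp only at hB
    split_ifs at hB with h1 h2
    · exact Or.inl (hGcardt B h1)
    · exact Or.inr h2
    · exact absurd rfl hB
  · intro B hB hBne
    dsimp only at hB
    by_cases h1 : B ∈ G
    · exact hGsub B h1
    · rw [if_neg h1, if_neg hBne] at hB
      exact absurd rfl hB
  · intro a _
    have heq : ∀ B : Finset α,
        (if a ∈ B then (if B ∈ G then c else if B = ∅ then q else 0) else 0) =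
        (if B ∈ G.filter (fun B => a ∈ B) then c else 0) := by
      intro B
      by_cases ha : a ∈ B
      · by_cases hBG : B ∈ G
        · simp [ha, hBG]
        · have : B ≠ ∅ := Finset.ne_empty_of_mem ha
          simp [ha, hBG, this]
      · have : B ∉ G.filter (fun B => a ∈ B) := by simp [ha]
        simp [ha, this]
    rw [Finset.sum_congr rfl (fun B _ => heq B), Finset.sum_ite_mem, Finset.univ_inter,
      Finset.sum_const, nsmul_eq_mul]
    have hcard : (G.filter (fun B => a ∈ B)).card ≤ 1 := by
      apply Finset.card_le_one.mpr
      intro B hB C hC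
      rw [Finset.mem_filter] at hB hC
      by_contra hne
      exact Finset.disjoint_left.mp (hGdisj B hB.1 C hC.1 hne) hB.2 hC.2
    calc ((G.filter (fun B => a ∈ B)).card : ℝ) * c ≤ 1 * c := by
          apply mul_le_mul_of_nonneg_right _ hc0
          exact_mod_cast hcard
      _ = c := one_mul c
  · have hupR : (A.card : ℝ) ≤ (G.card : ℝ) * t + (k : ℝ) * t := by exact_mod_cast hup
    have h1 : (1 - δ) * (A.card : ℝ) ≤ (G.card : ℝ) * t := by nlinarith [hupR, hktδ]
    have h2 : (1 - δ : ℝ) ≤ (G.card : ℝ) * ((t : ℝ) / A.card) := by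
      rw [mul_div_assoc']
      exact (le_div_iff₀ hA0).mpr h1
    rw [← hcdef] at h2
    show (if (∅ : Finset α) ∈ G then c else if (∅ : Finset α) = ∅ then q else 0) ≤ δ
    rw [if_neg hemptyG, if_pos rfl, hqdef]
    linarith
end

section
/- There exists a function R: ℕ × ℕ × ℕ × (0,1] → ℕ so that the following holds. Let G = (V_1, ..., V_k, c) be a k-partite Σ-chart with n ≥ R(|Σ|, k, t, α) vertices in each class, and let B ⊆ ⋃_{i<j}(V_i × V_j) be a set of 'undesirable' edges with |B| ≤ ε·C(k,2)·n². Then G contains an induced subchart (W_1, ..., W_k) such that: (1) |W_i| = t for every i; (2) the coloring c restricted to W_i × W_j is constant for every 1 ≤ i < j ≤ k; (3) |B ∩ ⋃_{i<j}(W_i × W_j)| ≤ (1+α)·ε·C(k,2)·t². -/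
set_option maxHeartbeats 1600000

open Finset

section Helpers

variable {β : Type*} [DecidableEq β]


lemma count_mem_powersetCard (s : Finset β) (r : ℕ) (x : β) (hx : x ∈ s) :
    ((s.powersetCard (r+1)).filter (fun T => x ∈ T)).card = (s.card - 1).choose r := by
  have h : ((s.powersetCard (r+1)).filter (fun T => x ∈ T)).card
      = ((s.erase x).powersetCard r).card := by
    apply Finset.card_bij (fun T _ => T.erase x)
    · intro T hT
      simp only [mem_filter, mem_powersetCard] at hT
      rw [mem_powersetCard]
      refine ⟨fun y hy => mem_erase.mpr ⟨(mem_erase.mp hy).1, hT.1.1 (mem_erase.mp hy).2⟩, ?_⟩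
      rw [card_erase_of_mem hT.2, hT.1.2]
      rfl
    · intro T hT T' hT' h
      simp only [mem_filter] at hT hT'
      rw [← insert_erase hT.2, h, insert_erase hT'.2]
    · intro T' hT'
      rw [mem_powersetCard] at hT'
      have hxT' : x ∉ T' := fun hc => (mem_erase.mp (hT'.1 hc)).1 rfl
      refine ⟨insert x T', ?_, ?_⟩
      · simp only [mem_filter, mem_powersetCard]
        refine ⟨⟨?_, ?_⟩, mem_insert_self x T'⟩
        · intro y hy
          rcases mem_insert.mp hy with rfl | hy
          · exact hx
          · exact (erase_subset x s) (hT'.1 hy)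
        · rw [card_insert_of_notMem hxT', hT'.2]
      · rw [erase_insert hxT']
  rw [h, card_powersetCard, card_erase_of_mem hx]

lemma sum_powersetCard_sum (s : Finset β) (f : β → ℝ) (r : ℕ) :
    ∑ T ∈ s.powersetCard (r+1), ∑ x ∈ T, f x
      = ((s.card - 1).choose r : ℝ) * ∑ x ∈ s, f x := by
  have h1 : ∀ T ∈ s.powersetCard (r+1), ∑ x ∈ T, f x = ∑ x ∈ s, if x ∈ T then f x else 0 := by
    intro T hT
    rw [mem_powersetCard] at hT
    rw [sum_ite_mem, inter_comm, (inter_eq_left).mpr hT.1]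
  rw [Finset.sum_congr rfl h1, Finset.sum_comm, Finset.mul_sum]
  apply Finset.sum_congr rfl
  intro x hx
  rw [Finset.sum_ite, Finset.sum_const_zero, add_zero, Finset.sum_const, nsmul_eq_mul,
    count_mem_powersetCard s r x hx]

/-- Lemma A : a `t`-subset whose sum is at most `t/|s|` of the total. -/
lemma exists_subset_sum_le (s : Finset β) (f : β → ℝ) (t : ℕ) (ht : t ≤ s.card) :
    ∃ T ⊆ s, T.card = t ∧ (s.card : ℝ) * ∑ x ∈ T, f x ≤ (t : ℝ) * ∑ x ∈ s, f x := by
  rcases Nat.eq_zero_or_pos t with rfl | htpos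
  · exact ⟨∅, empty_subset s, card_empty, by simp⟩
  obtain ⟨r, rfl⟩ : ∃ r, t = r + 1 := ⟨t - 1, (Nat.succ_pred_eq_of_pos htpos).symm⟩
  have hne : (s.powersetCard (r+1)).Nonempty := by
    rw [powersetCard_nonempty]; exact ht
  have havg : ∃ T ∈ s.powersetCard (r+1),
      ((s.powersetCard (r+1)).card : ℝ) * ∑ x ∈ T, f x
        ≤ ∑ T' ∈ s.powersetCard (r+1), ∑ x ∈ T', f x := by
    by_contra hc
    push_neg at hc
    have := Finset.sum_lt_sum_of_nonempty hne
      (f := fun T => ∑ T' ∈ s.powersetCard (r+1), ∑ x ∈ T', f x)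
      (g := fun T => ((s.powersetCard (r+1)).card : ℝ) * ∑ x ∈ T, f x) (fun T hT => hc T hT)
    rw [Finset.sum_const, nsmul_eq_mul, ← Finset.mul_sum] at this
    exact lt_irrefl _ this
  obtain ⟨T, hT, hle⟩ := havg
  rw [mem_powersetCard] at hT
  refine ⟨T, hT.1, hT.2, ?_⟩
  rw [sum_powersetCard_sum s f r, card_powersetCard] at hle
  -- hle : (choose (card s) (r+1)) * Σ_T ≤ choose (card s - 1) r * Σ_s
  -- multiply by positivity: card s * choose (card s -1) r = (r+1) * choose (card s) (r+1)
  have hcard : 1 ≤ s.card := le_trans htpos ht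
  obtain ⟨n, hn⟩ : ∃ n, s.card = n + 1 := ⟨s.card - 1, (Nat.succ_pred_eq_of_pos hcard).symm⟩
  have hid : (n+1) * (n.choose r) = ((n+1).choose (r+1)) * (r+1) := Nat.add_one_mul_choose_eq n r
  have hchoosepos : (0:ℝ) < ((n+1).choose (r+1) : ℝ) := by
    have : 0 < (n+1).choose (r+1) := Nat.choose_pos (by omega)
    exact_mod_cast this
  rw [hn] at hle ⊢
  simp only [Nat.add_sub_cancel] at hle
  have key : ((n+1).choose (r+1) : ℝ) * (((n+1:ℕ) : ℝ) * ∑ x ∈ T, f x)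
      ≤ ((n+1).choose (r+1) : ℝ) * (((r+1:ℕ) : ℝ) * ∑ x ∈ s, f x) := by
    have h2 := mul_le_mul_of_nonneg_left hle (by positivity : (0:ℝ) ≤ ((n+1:ℕ):ℝ))
    calc ((n+1).choose (r+1) : ℝ) * (((n+1:ℕ) : ℝ) * ∑ x ∈ T, f x)
        = ((n+1:ℕ):ℝ) * (((n + 1).choose (r + 1):ℝ) * ∑ x ∈ T, f x) := by ring
      _ ≤ ((n+1:ℕ):ℝ) * ((n.choose r:ℝ) * ∑ x ∈ s, f x) := h2
      _ = (((n+1) * n.choose r : ℕ):ℝ) * ∑ x ∈ s, f x := by push_cast; ring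
      _ = ((((n+1).choose (r+1)) * (r+1) : ℕ):ℝ) * ∑ x ∈ s, f x := by rw [hid]
      _ = ((n+1).choose (r+1) : ℝ) * (((r+1:ℕ) : ℝ) * ∑ x ∈ s, f x) := by push_cast; ring
  exact le_of_mul_le_mul_left key hchoosepos

/-- Lemma B : a `σ`-homogeneous `t`-subset with small weight. -/
lemma exists_homog_subset_sum_le {Λ : Type*} [DecidableEq Λ]
    (s : Finset β) (σ : β → Λ) (f : β → ℝ) (hf : ∀ x ∈ s, 0 ≤ f x) (L t : ℕ)
    (him : (s.image σ).card ≤ L) (hsize : L * (t-1) < s.card) :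
    ∃ T ⊆ s, T.card = t ∧ (∀ x ∈ T, ∀ y ∈ T, σ x = σ y) ∧
      ((s.card : ℝ) - (L : ℝ) * (t-1 : ℕ)) * ∑ x ∈ T, f x ≤ (t : ℝ) * ∑ x ∈ s, f x := by
  classical
  rcases Nat.eq_zero_or_pos t with rfl | htpos
  · refine ⟨∅, empty_subset s, card_empty, by simp, ?_⟩
    simp
  set I := s.image σ with hI
  set cls : Λ → Finset β := fun l => s.filter (fun x => σ x = l) with hcls
  have hfib : ∀ x ∈ s, σ x ∈ I := fun x hx => mem_image_of_mem σ hx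
  have hcardsum : s.card = ∑ l ∈ I, (cls l).card :=
    Finset.card_eq_sum_card_fiberwise hfib
  have hsumsum : ∑ l ∈ I, ∑ x ∈ cls l, f x = ∑ x ∈ s, f x :=
    Finset.sum_fiberwise_of_maps_to hfib f
  set BIG := I.filter (fun l => t ≤ (cls l).card) with hBIG
  set M := ∑ l ∈ BIG, (cls l).card with hM
  have hSnonneg : ∀ l ∈ I, 0 ≤ ∑ x ∈ cls l, f x := by
    intro l hl
    exact Finset.sum_nonneg (fun x hx => hf x (mem_filter.mp hx).1)
  have hMlow : s.card ≤ M + L * (t-1) := by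
    have hsplit : ∑ l ∈ I, (cls l).card
        = M + ∑ l ∈ I.filter (fun l => ¬ t ≤ (cls l).card), (cls l).card := by
      rw [hM, Finset.sum_filter_add_sum_filter_not]
    have hsmall : ∑ l ∈ I.filter (fun l => ¬ t ≤ (cls l).card), (cls l).card
        ≤ L * (t-1) := by
      calc ∑ l ∈ I.filter (fun l => ¬ t ≤ (cls l).card), (cls l).card
          ≤ ∑ _l ∈ I.filter (fun l => ¬ t ≤ (cls l).card), (t-1) := by
            apply Finset.sum_le_sum
            intro l hl
            have := (mem_filter.mp hl).2
            omega
        _ = (I.filter (fun l => ¬ t ≤ (cls l).card)).card * (t-1) := by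
            rw [Finset.sum_const, smul_eq_mul]
        _ ≤ L * (t-1) := by
            apply Nat.mul_le_mul_right
            exact le_trans (Finset.card_filter_le _ _) him
    omega
  have hBIGne : BIG.Nonempty := by
    by_contra hc
    rw [Finset.not_nonempty_iff_eq_empty] at hc
    rw [hM, hc, Finset.sum_empty] at hMlow
    omega
  -- min ratio class
  have hmin : ∃ l ∈ BIG, (M:ℝ) * ∑ x ∈ cls l, f x
      ≤ ((cls l).card : ℝ) * ∑ l' ∈ BIG, ∑ x ∈ cls l', f x := by
    by_contra hc
    push_neg at hc
    have hlt := Finset.sum_lt_sum_of_nonempty hBIGne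
      (f := fun l => ((cls l).card : ℝ) * ∑ l' ∈ BIG, ∑ x ∈ cls l', f x)
      (g := fun l => (M:ℝ) * ∑ x ∈ cls l, f x) hc
    rw [← Finset.sum_mul, ← Finset.mul_sum] at hlt
    have : (M:ℝ) = ∑ l ∈ BIG, ((cls l).card : ℝ) := by rw [hM]; push_cast; rfl
    rw [← this] at hlt
    exact lt_irrefl _ hlt
  obtain ⟨l, hlBIG, hlmin⟩ := hmin
  have hlt : t ≤ (cls l).card := (mem_filter.mp hlBIG).2
  obtain ⟨T, hTsub, hTcard, hTle⟩ := exists_subset_sum_le (cls l) f t hlt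
  have hTsubs : T ⊆ s := hTsub.trans (Finset.filter_subset _ _)
  have hTnonneg : 0 ≤ ∑ x ∈ T, f x := Finset.sum_nonneg (fun x hx => hf x (hTsubs hx))
  refine ⟨T, hTsubs, hTcard, ?_, ?_⟩
  · intro x hx y hy
    have hx' := (mem_filter.mp (hTsub hx)).2
    have hy' := (mem_filter.mp (hTsub hy)).2
    rw [hx', hy']
  · -- chain
    have hclspos : (0:ℝ) < ((cls l).card : ℝ) := by
      have : 0 < (cls l).card := by omega
      exact_mod_cast this
    have hMnn : (0:ℝ) ≤ (M:ℝ) := Nat.cast_nonneg M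
    have htnn : (0:ℝ) ≤ (t:ℝ) := Nat.cast_nonneg t
    have hSbig_le : ∑ l' ∈ BIG, ∑ x ∈ cls l', f x ≤ ∑ x ∈ s, f x := by
      rw [← hsumsum]
      apply Finset.sum_le_sum_of_subset_of_nonneg (Finset.filter_subset _ _)
      intro l' hl' _
      exact hSnonneg l' hl'
    have step3 : (M:ℝ) * ∑ x ∈ T, f x ≤ (t:ℝ) * ∑ l' ∈ BIG, ∑ x ∈ cls l', f x := by
      have hmul : ((cls l).card : ℝ) * ((M:ℝ) * ∑ x ∈ T, f x)
          ≤ ((cls l).card : ℝ) * ((t:ℝ) * ∑ l' ∈ BIG, ∑ x ∈ cls l', f x) := by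
        calc ((cls l).card : ℝ) * ((M:ℝ) * ∑ x ∈ T, f x)
            = (M:ℝ) * (((cls l).card : ℝ) * ∑ x ∈ T, f x) := by ring
          _ ≤ (M:ℝ) * ((t:ℝ) * ∑ x ∈ cls l, f x) := by
              apply mul_le_mul_of_nonneg_left hTle hMnn
          _ = (t:ℝ) * ((M:ℝ) * ∑ x ∈ cls l, f x) := by ring
          _ ≤ (t:ℝ) * (((cls l).card : ℝ) * ∑ l' ∈ BIG, ∑ x ∈ cls l', f x) := by
              apply mul_le_mul_of_nonneg_left hlmin htnn
          _ = ((cls l).card : ℝ) * ((t:ℝ) * ∑ l' ∈ BIG, ∑ x ∈ cls l', f x) := by ring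
      exact le_of_mul_le_mul_left hmul hclspos
    have step1 : ((s.card : ℝ) - (L : ℝ) * (t-1 : ℕ)) ≤ (M:ℝ) := by
      have h0 : ((s.card : ℕ) : ℝ) ≤ ((M + L * (t-1) : ℕ) : ℝ) := Nat.cast_le.mpr hMlow
      rw [Nat.cast_add, Nat.cast_mul] at h0
      linarith
    calc ((s.card : ℝ) - (L : ℝ) * (t-1 : ℕ)) * ∑ x ∈ T, f x
        ≤ (M:ℝ) * ∑ x ∈ T, f x := mul_le_mul_of_nonneg_right step1 hTnonneg
      _ ≤ (t:ℝ) * ∑ l' ∈ BIG, ∑ x ∈ cls l', f x := step3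
      _ ≤ (t:ℝ) * ∑ x ∈ s, f x := mul_le_mul_of_nonneg_left hSbig_le htnn

end Helpers

section Fibers

variable {V_ : Type*} [DecidableEq V_]
lemma fiber_snd (Bt : Finset (V_ × V_)) (s : Finset V_) :
    ∑ w ∈ s, (Bt.filter (fun e => e.2 = w)).card = (Bt.filter (fun e => e.2 ∈ s)).card := by
  rw [Finset.card_eq_sum_card_fiberwise
    (f := Prod.snd) (s := Bt.filter (fun e => e.2 ∈ s)) (t := s) (fun e he => (Finset.mem_filter.mp he).2)]
  apply Finset.sum_congr rfl
  intro w hw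
  congr 1
  rw [Finset.filter_filter]
  apply Finset.filter_congr
  intro e _
  constructor
  · intro h
    first
    | exact h.2
    | (subst h; exact ⟨hw, rfl⟩)
  · intro h
    first
    | exact h.2
    | (subst h; exact ⟨hw, rfl⟩)

lemma fiber_fst (Bt : Finset (V_ × V_)) (s : Finset V_) :
    ∑ u ∈ s, (Bt.filter (fun e => e.1 = u)).card = (Bt.filter (fun e => e.1 ∈ s)).card := by
  rw [Finset.card_eq_sum_card_fiberwise
    (f := Prod.fst) (s := Bt.filter (fun e => e.1 ∈ s)) (t := s) (fun e he => (Finset.mem_filter.mp he).2)]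
  apply Finset.sum_congr rfl
  intro w hw
  congr 1
  rw [Finset.filter_filter]
  apply Finset.filter_congr
  intro e _
  constructor
  · intro h
    first
    | exact h.2
    | (subst h; exact ⟨hw, rfl⟩)
  · intro h
    first
    | exact h.2
    | (subst h; exact ⟨hw, rfl⟩)

noncomputable def mstep (s g t k : ℕ) (α : ℝ) : ℕ := 4 * (g * s^(t*k)) * t * (⌈1/α⌉₊ + 1)

noncomputable def Rcore : ℕ → ℕ → ℕ → ℕ → ℝ → ℕ
  | 0, _, _, _, _ => 1
  | (k+1), s, g, t, α =>
      max (max (mstep s g t k α) (Rcore k s (g * s^(mstep s g t k α)) t (α/3))) 1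

lemma Rcore_pos (k s g t : ℕ) (α : ℝ) : 1 ≤ Rcore k s g t α := by
  cases k with
  | zero => exact le_refl 1
  | succ k => exact le_max_right _ 1

end Fibers

section Core

lemma arith_slack (α : ℝ) (L t : ℕ) (hα : 0 < α) (hα1 : α ≤ 1) (hL1 : 1 ≤ L) (ht : 1 ≤ t) :
    ((4*L*t*(⌈1/α⌉₊+1) : ℕ) : ℝ)
      ≤ (1+α/3)*(((4*L*t*(⌈1/α⌉₊+1) : ℕ) : ℝ) - (L:ℝ)*((t-1:ℕ):ℝ)) := by
  have hceil : 1/α ≤ (⌈1/α⌉₊:ℝ) := Nat.le_ceil _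
  have hLR : (1:ℝ) ≤ (L:ℝ) := by exact_mod_cast hL1
  have htR : (1:ℝ) ≤ (t:ℝ) := by exact_mod_cast ht
  have ht1 : ((t-1:ℕ):ℝ) = (t:ℝ) - 1 := by
    have : (1:ℕ) ≤ t := ht
    push_cast [this]
    ring
  have hαC : 1 ≤ α * (⌈1/α⌉₊:ℝ) := by
    have h2 : α * (1/α) ≤ α * (⌈1/α⌉₊:ℝ) := mul_le_mul_of_nonneg_left hceil (le_of_lt hα)
    rwa [mul_one_div_cancel (ne_of_gt hα)] at h2
  have hcast : ((4*L*t*(⌈1/α⌉₊+1) : ℕ) : ℝ) = 4*(L:ℝ)*(t:ℝ)*((⌈1/α⌉₊:ℝ)+1) := by push_cast; ring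
  rw [hcast, ht1]
  set C := (⌈1/α⌉₊:ℝ) with hC
  have hC0 : 0 ≤ C := Nat.cast_nonneg _
  have hBig : (4/3)*((L:ℝ)*(t:ℝ)) * 1 ≤ (4/3)*((L:ℝ)*(t:ℝ)) * (α*C) := by
    apply mul_le_mul_of_nonneg_left hαC
    positivity
  have h3 : 0 ≤ α*(4*(L:ℝ)*(t:ℝ) - (L:ℝ)*((t:ℝ)-1)) := by
    apply mul_nonneg (le_of_lt hα)
    nlinarith
  have h4 : (L:ℝ)*((t:ℝ)-1) ≤ (L:ℝ)*(t:ℝ) := by nlinarith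
  nlinarith [hBig, h3, h4]

lemma assemble (α tR mR nR P2 SWo Xo VLo TotL c1 c2 dwl wo bl bt LR t1R : ℝ)
    (hα : 0 < α) (hα1 : α ≤ 1)
    (hmpos : 0 < mR) (hnpos : 0 < nR)
    (hP20 : 0 ≤ P2) (hSWo0 : 0 ≤ SWo) (hXo0 : 0 ≤ Xo) (hVLo0 : 0 ≤ VLo) (hTotL0 : 0 ≤ TotL)
    (hc10 : 0 ≤ c1) (hc20 : 0 ≤ c2) (hdwl0 : 0 ≤ dwl) (hwo0 : 0 ≤ wo)
    (hbl0 : 0 ≤ bl) (hbt0 : 0 ≤ bt) (htR0 : 0 ≤ tR)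
    (harith1 : mR ≤ (1+α/3)*(mR - LR*t1R))
    (hWlsum : (mR - LR*t1R) * (dwl + wo) ≤ tR * (c1 + Xo))
    (hXavg : nR * (tR*tR/nR * c2 + tR * Xo) ≤ mR * (tR*tR/nR * bt + tR * VLo))
    (hcost : P2 + (SWo + tR/mR * c1)
      ≤ (1+α/3)*(tR^2*bl/nR^2 + tR*(TotL + tR/mR*c2)/nR)) :
    P2 + dwl + (SWo + wo) ≤ (1+α)*(tR^2*(bt+bl)/nR^2 + tR*(TotL+VLo)/nR) := by
  have hu1 : (1:ℝ) ≤ 1+α/3 := by linarith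
  have hu0 : (0:ℝ) ≤ 1+α/3 := by linarith
  set E : ℝ := tR/mR * c1 with hEdef
  set q : ℝ := tR/mR * Xo with hqdef
  have hE0 : 0 ≤ E := by rw [hEdef]; positivity
  have hq0 : 0 ≤ q := by rw [hqdef]; positivity
  have hDW0 : 0 ≤ dwl + wo := by linarith
  -- class-trick conversion
  have hD : dwl + wo ≤ (1+α/3)*(E + q) := by
    have h1 : mR*(dwl+wo) ≤ (1+α/3)*(mR - LR*t1R)*(dwl+wo) :=
      mul_le_mul_of_nonneg_right harith1 hDW0
    have h2 : (1+α/3)*(mR - LR*t1R)*(dwl+wo) ≤ (1+α/3)*(tR*(c1+Xo)) := by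
      rw [mul_assoc]
      exact mul_le_mul_of_nonneg_left hWlsum hu0
    have h3 : mR*(dwl+wo) ≤ (1+α/3)*(tR*(c1+Xo)) := le_trans h1 h2
    have h4 : mR*((1+α/3)*(E + q)) = (1+α/3)*(tR*(c1+Xo)) := by
      rw [hEdef, hqdef]
      field_simp
    rw [← mul_le_mul_iff_right₀ hmpos, h4]
    exact h3
  -- sample average conversion
  have hQ : tR*(tR/mR * c2)/nR + q ≤ tR^2*bt/nR^2 + tR*VLo/nR := by
    have h5 : (tR*tR/nR * c2 + tR * Xo)/mR ≤ (tR*tR/nR * bt + tR * VLo)/nR := by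
      rw [div_le_div_iff₀ hmpos hnpos]
      nlinarith [hXavg]
    have h6 : tR*(tR/mR * c2)/nR + q = (tR*tR/nR * c2 + tR * Xo)/mR := by
      rw [hqdef]; field_simp
    have h7 : (tR*tR/nR * bt + tR * VLo)/nR = tR^2*bt/nR^2 + tR*VLo/nR := by
      field_simp
    rw [h6, ← h7]
    exact h5
  have step1 : P2 + dwl + (SWo + wo) ≤ (P2 + SWo + E) + (α/3)*E + (1+α/3)*q := by
    nlinarith [hD]
  have step2 : (P2 + SWo + E) + (α/3)*E + (1+α/3)*q ≤ (1+α/3)*((P2 + SWo + E) + q) := by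
    nlinarith [hE0, hP20, hSWo0]
  have step3 : (P2 + SWo + E) + q
      ≤ (1+α/3)*(tR^2*bl/nR^2 + tR*(TotL + tR/mR*c2)/nR) + q := by
    linarith [hcost]
  have step4 : (1+α/3)*(tR^2*bl/nR^2 + tR*(TotL + tR/mR*c2)/nR) + q
      ≤ (1+α/3)*((tR^2*bl/nR^2 + tR*(TotL + tR/mR*c2)/nR) + q) := by
    nlinarith [hq0, hu1]
  have step5 : (tR^2*bl/nR^2 + tR*(TotL + tR/mR*c2)/nR) + q
      ≤ tR^2*(bt+bl)/nR^2 + tR*(TotL+VLo)/nR := by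
    have hexp1 : tR*(TotL + tR/mR*c2)/nR = tR*TotL/nR + tR*(tR/mR * c2)/nR := by ring
    have hexp3 : tR^2*(bt+bl)/nR^2 = tR^2*bt/nR^2 + tR^2*bl/nR^2 := by ring
    have hexp4 : tR*(TotL+VLo)/nR = tR*TotL/nR + tR*VLo/nR := by ring
    linarith [hQ]
  have hRHSF0 : 0 ≤ tR^2*(bt+bl)/nR^2 + tR*(TotL+VLo)/nR := by
    have h1 : 0 ≤ TotL + VLo := by linarith
    positivity
  have hsq : (1+α/3)*(1+α/3) ≤ 1+α := by nlinarith
  calc P2 + dwl + (SWo + wo)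
      ≤ (1+α/3)*((P2 + SWo + E) + q) := le_trans step1 step2
    _ ≤ (1+α/3)*((1+α/3)*(tR^2*bl/nR^2 + tR*(TotL + tR/mR*c2)/nR) + q) :=
        mul_le_mul_of_nonneg_left step3 hu0
    _ ≤ (1+α/3)*((1+α/3)*((tR^2*bl/nR^2 + tR*(TotL + tR/mR*c2)/nR) + q)) :=
        mul_le_mul_of_nonneg_left step4 hu0
    _ ≤ (1+α/3)*((1+α/3)*(tR^2*(bt+bl)/nR^2 + tR*(TotL+VLo)/nR)) :=
        mul_le_mul_of_nonneg_left (mul_le_mul_of_nonneg_left step5 hu0) hu0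
    _ ≤ (1+α)*(tR^2*(bt+bl)/nR^2 + tR*(TotL+VLo)/nR) := by
        rw [← mul_assoc]
        exact mul_le_mul_of_nonneg_right hsq hRHSF0

theorem core : ∀ (k s g t : ℕ) (α : ℝ), 0 < α → α ≤ 1 → 1 ≤ t →
    ∀ (V_ C Λ : Type) [DecidableEq V_] [DecidableEq C] [Fintype C] [DecidableEq Λ],
    Fintype.card C ≤ s →
    ∀ (n : ℕ) (V : Fin k → Finset V_) (c : V_ → V_ → C) (γ : V_ → Λ)
      (B : Finset (V_ × V_)) (ω : V_ → ℝ),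
    (∀ v, 0 ≤ ω v) →
    (∀ i j, i ≠ j → Disjoint (V i) (V j)) →
    (∀ i, (V i).card = n) →
    (∀ i, ((V i).image γ).card ≤ g) →
    Rcore k s g t α ≤ n →
    (∀ e ∈ B, ∃ i j, i < j ∧ e.1 ∈ V i ∧ e.2 ∈ V j) →
    ∃ W : Fin k → Finset V_,
      (∀ i, W i ⊆ V i) ∧ (∀ i, (W i).card = t) ∧
      (∀ i j, i < j → ∀ v ∈ W i, ∀ w ∈ W j, ∀ v' ∈ W i, ∀ w' ∈ W j, c v w = c v' w') ∧
      (∀ i, ∀ v ∈ W i, ∀ v' ∈ W i, γ v = γ v') ∧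
      ((∑ i : Fin k, ∑ j : Fin k,
          if i < j then ((B.filter (fun e => e.1 ∈ W i ∧ e.2 ∈ W j)).card : ℝ) else 0)
        + ∑ i : Fin k, ∑ v ∈ W i, ω v
        ≤ (1+α) * ((t:ℝ)^2 * B.card / (n:ℝ)^2
            + (t:ℝ) * (∑ i : Fin k, ∑ v ∈ V i, ω v) / n)) := by
  intro k
  induction k with
  | zero =>
    intro s g t α hα hα1 ht V_ C Λ _ _ _ _ hC n V c γ B ω hω hdisj hcard him hR hsupp
    refine ⟨fun i => i.elim0, fun i => i.elim0, fun i => i.elim0, fun i j => i.elim0,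
      fun i => i.elim0, ?_⟩
    have hn : 1 ≤ n := hR
    simp only [Finset.univ_eq_empty, Finset.sum_empty]
    have h1 : (0:ℝ) ≤ (1+α) := by linarith
    have h2 : (0:ℝ) ≤ (t:ℝ)^2 * B.card / (n:ℝ)^2 := by positivity
    rw [add_zero]
    positivity
  | succ k IH =>
    intro s g t α hα hα1 ht V_ C Λ _ _ _ _ hC n V c γ B ω hω hdisj hcard him hR hsupp
    have hα3 : 0 < α/3 := by linarith
    have hα31 : α/3 ≤ 1 := by linarith
    set last : Fin (k+1) := Fin.last k with hlastdef
    have hn1 : 1 ≤ n := le_trans (le_max_right _ 1) hR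
    set m := mstep s g t k α with hmdef
    have hmn : m ≤ n := le_trans (le_trans (le_max_left _ _) (le_max_left _ 1)) hR
    have hRrec : Rcore k s (g * s^m) t (α/3) ≤ n :=
      le_trans (le_trans (le_max_right _ _) (le_max_left _ 1)) hR
    have hVlastcard : (V last).card = n := hcard last
    have hVlastne : (V last).Nonempty := by
      rw [← Finset.card_pos, hVlastcard]; omega
    obtain ⟨v₀, hv₀⟩ := hVlastne
    have hs1 : 1 ≤ s := by
      have : Nonempty C := ⟨c v₀ v₀⟩
      have := Fintype.card_pos (α := C)
      omega
    have hg1 : 1 ≤ g := by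
      have h1 : 0 < ((V last).image γ).card :=
        Finset.card_pos.mpr ⟨γ v₀, Finset.mem_image_of_mem _ hv₀⟩
      have := him last
      omega
    set L := g * s^(t*k) with hLdef
    have hL1 : 1 ≤ L := Nat.one_le_iff_ne_zero.mpr (by positivity)
    have hmval : m = 4*L*t*(⌈1/α⌉₊+1) := rfl
    have hm1 : 1 ≤ m := by
      rw [hmval]
      exact Nat.one_le_iff_ne_zero.mpr (by positivity)
    have hmpos : (0:ℝ) < (m:ℝ) := by exact_mod_cast hm1
    have hnpos : (0:ℝ) < (n:ℝ) := by exact_mod_cast hn1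
    have htpos : (0:ℝ) < (t:ℝ) := by exact_mod_cast ht
    -- split B
    set Btop := B.filter (fun e => e.2 ∈ V last) with hBtopdef
    set Blow := B.filter (fun e => ¬ e.2 ∈ V last) with hBlowdef
    have hBsplit : Btop.card + Blow.card = B.card :=
      Finset.card_filter_add_card_filter_not _
    -- choose X
    set f₀ : V_ → ℝ := fun w =>
      (t:ℝ)*(t:ℝ)/(n:ℝ) * ((Btop.filter (fun e => e.2 = w)).card : ℝ) + (t:ℝ) * ω w with hf₀def
    obtain ⟨X, hXsub, hXcard, hXavg⟩ :=
      exists_subset_sum_le (V last) f₀ m (by rw [hVlastcard]; exact hmn)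
    -- recursive data
    set Bt2 := Btop.filter (fun e => e.2 ∈ X) with hBt2def
    set cnt : V_ → ℕ := fun u => (Bt2.filter (fun e => e.1 = u)).card with hcntdef
    set ω' : V_ → ℝ := fun u => ω u + (t:ℝ)/(m:ℝ) * (cnt u : ℝ) with hω'def
    set γ' : V_ → Λ × ({x // x ∈ X} → C) := fun u => (γ u, fun x => c u x.1) with hγ'def
    have hω'0 : ∀ v, 0 ≤ ω' v := fun v => add_nonneg (hω v)
      (mul_nonneg (div_nonneg (Nat.cast_nonneg t) (Nat.cast_nonneg m)) (Nat.cast_nonneg _))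
    have hdisj' : ∀ i j : Fin k, i ≠ j → Disjoint (V i.castSucc) (V j.castSucc) :=
      fun i j hij => hdisj _ _ (fun h => hij (Fin.castSucc_injective _ h))
    have hcard' : ∀ i : Fin k, (V i.castSucc).card = n := fun i => hcard _
    have him' : ∀ i : Fin k, ((V i.castSucc).image γ').card ≤ g * s^m := by
      intro i
      have hsub : (V i.castSucc).image γ' ⊆
          ((V i.castSucc).image γ) ×ˢ (Finset.univ : Finset ({x // x ∈ X} → C)) := by
        intro p hp
        obtain ⟨u, hu, rfl⟩ := Finset.mem_image.mp hp
        exact Finset.mem_product.mpr ⟨Finset.mem_image_of_mem _ hu, Finset.mem_univ _⟩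
      calc ((V i.castSucc).image γ').card
          ≤ (((V i.castSucc).image γ) ×ˢ (Finset.univ : Finset ({x // x ∈ X} → C))).card :=
            Finset.card_le_card hsub
        _ = ((V i.castSucc).image γ).card * (Finset.univ : Finset ({x // x ∈ X} → C)).card :=
            Finset.card_product _ _
        _ ≤ g * s^m := by
            apply Nat.mul_le_mul (him _)
            rw [Finset.card_univ, Fintype.card_fun, Fintype.card_coe, hXcard]
            exact Nat.pow_le_pow_left hC m
    have hsupp' : ∀ e ∈ Blow, ∃ i j : Fin k, i < j ∧ e.1 ∈ V i.castSucc ∧ e.2 ∈ V j.castSucc := by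
      intro e he
      have heB := (Finset.mem_filter.mp he).1
      have hel := (Finset.mem_filter.mp he).2
      obtain ⟨i, j, hij, h1, h2⟩ := hsupp e heB
      have hjne : j ≠ last := by
        intro h; exact hel (h ▸ h2)
      have hjlt : (j : ℕ) < k := by
        have hj := j.isLt
        have : (j:ℕ) ≠ k := by
          intro hc; exact hjne (Fin.ext hc)
        omega
      have hilt : (i : ℕ) < k := by
        have := hij
        rw [Fin.lt_def] at this
        omega
      refine ⟨⟨(i:ℕ), hilt⟩, ⟨(j:ℕ), hjlt⟩, ?_, ?_, ?_⟩
      · rw [Fin.lt_def]; exact hij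
      · have : (⟨(i:ℕ), hilt⟩ : Fin k).castSucc = i := Fin.ext rfl
        rw [this]; exact h1
      · have : (⟨(j:ℕ), hjlt⟩ : Fin k).castSucc = j := Fin.ext rfl
        rw [this]; exact h2
    obtain ⟨W', hW'sub, hW'card, hW'mono, hW'γ, hW'cost⟩ :=
      IH s (g * s^m) t (α/3) hα3 hα31 ht V_ C (Λ × ({x // x ∈ X} → C)) hC n
        (fun i => V i.castSucc) c γ' Blow ω' hω'0 hdisj' hcard' him' hRrec hsupp'
    -- the union of the chosen lower parts
    set allW : Finset V_ := Finset.univ.biUnion W' with hallWdef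
    have hallWcard : allW.card ≤ t*k := by
      calc allW.card ≤ ∑ i : Fin k, (W' i).card := Finset.card_biUnion_le
        _ = ∑ _i : Fin k, t := by exact Finset.sum_congr rfl (fun i _ => hW'card i)
        _ = t*k := by rw [Finset.sum_const, Finset.card_univ, Fintype.card_fin, smul_eq_mul,
              Nat.mul_comm]
    -- class trick on X
    set Bt3 := Btop.filter (fun e => e.1 ∈ allW) with hBt3def
    set f₁ : V_ → ℝ := fun w => ((Bt3.filter (fun e => e.2 = w)).card : ℝ) + ω w with hf₁def
    set σc : V_ → Λ × ({x // x ∈ allW} → C) := fun w => (γ w, fun u => c u.1 w) with hσcdef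
    have hf₁0 : ∀ w ∈ X, 0 ≤ f₁ w := fun w _ => add_nonneg (Nat.cast_nonneg _) (hω w)
    have himσ : (X.image σc).card ≤ L := by
      have hsub : X.image σc ⊆
          ((V last).image γ) ×ˢ (Finset.univ : Finset ({x // x ∈ allW} → C)) := by
        intro p hp
        obtain ⟨u, hu, rfl⟩ := Finset.mem_image.mp hp
        exact Finset.mem_product.mpr ⟨Finset.mem_image_of_mem _ (hXsub hu), Finset.mem_univ _⟩
      calc (X.image σc).card
          ≤ (((V last).image γ) ×ˢ (Finset.univ : Finset ({x // x ∈ allW} → C))).card :=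
            Finset.card_le_card hsub
        _ = ((V last).image γ).card * (Finset.univ : Finset ({x // x ∈ allW} → C)).card :=
            Finset.card_product _ _
        _ ≤ L := by
            rw [hLdef]
            apply Nat.mul_le_mul (him _)
            rw [Finset.card_univ, Fintype.card_fun, Fintype.card_coe]
            calc (Fintype.card C)^(allW.card) ≤ s^(allW.card) :=
                  Nat.pow_le_pow_left hC _
              _ ≤ s^(t*k) := Nat.pow_le_pow_right hs1 hallWcard
    have hsizeX : L * (t-1) < X.card := by
      rw [hXcard, hmval]
      have h1 : 1 ≤ ⌈1/α⌉₊+1 := by omega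
      have h2 : L*(t-1) ≤ L*t := Nat.mul_le_mul_left L (Nat.sub_le t 1)
      have h3 : 4*L*t = 4*(L*t) := by ring
      have h4 : 4*L*t*(⌈1/α⌉₊+1) = (4*L*t)*(⌈1/α⌉₊+1) := rfl
      have hLt : 1 ≤ L*t := Nat.one_le_iff_ne_zero.mpr (by positivity)
      calc L * (t-1) < 4*(L*t) := by omega
        _ = 4*L*t := by ring
        _ ≤ 4*L*t*(⌈1/α⌉₊+1) := Nat.le_mul_of_pos_right _ (by omega)
    obtain ⟨Wl, hWlsub, hWlcard, hWlσ, hWlsum⟩ :=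
      exists_homog_subset_sum_le X σc f₁ hf₁0 L t himσ hsizeX
    -- the final choice
    set W : Fin (k+1) → Finset V_ := Fin.lastCases Wl W' with hWdef
    have hWlast : W last = Wl := by
      show Fin.lastCases (motive := fun _ => Finset V_) Wl W' (Fin.last k) = Wl
      exact Fin.lastCases_last
    have hWcast : ∀ i : Fin k, W i.castSucc = W' i := by
      intro i
      show Fin.lastCases (motive := fun _ => Finset V_) Wl W' i.castSucc = W' i
      exact Fin.lastCases_castSucc i
    refine ⟨W, ?_, ?_, ?_, ?_, ?_⟩
    · -- subsets
      intro i
      induction i using Fin.lastCases with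
      | last => rw [hWlast]; exact hWlsub.trans hXsub
      | cast i => rw [hWcast]; exact hW'sub i
    · -- cards
      intro i
      induction i using Fin.lastCases with
      | last => rw [hWlast]; exact hWlcard
      | cast i => rw [hWcast]; exact hW'card i
    · -- mono
      intro i j hij
      by_cases hj : j = last
      · subst hj
        have hine : i ≠ last := ne_of_lt hij
        obtain ⟨i', rfl⟩ := (Fin.eq_castSucc_or_eq_last i).resolve_right hine
        rw [hWlast, hWcast]
        intro v hv w hw v' hv' w' hw'
        have h1 : γ' v = γ' v' := hW'γ i' v hv v' hv'
        have hwX : w ∈ X := hWlsub hw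
        have e1 : c v w = c v' w := congrFun (congrArg Prod.snd h1) ⟨w, hwX⟩
        have hv'all : v' ∈ allW := Finset.mem_biUnion.mpr ⟨i', Finset.mem_univ _, hv'⟩
        have h2 : σc w = σc w' := hWlσ w hw w' hw'
        have e2 : c v' w = c v' w' := congrFun (congrArg Prod.snd h2) ⟨v', hv'all⟩
        rw [e1, e2]
      · obtain ⟨j', rfl⟩ := (Fin.eq_castSucc_or_eq_last j).resolve_right hj
        have hine : i ≠ last := by
          intro h
          subst h
          exact absurd (lt_trans hij (Fin.castSucc_lt_last j')) (lt_irrefl _)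
        obtain ⟨i', rfl⟩ := (Fin.eq_castSucc_or_eq_last i).resolve_right hine
        have hij' : i' < j' := (Fin.castSucc_lt_castSucc_iff).mp hij
        rw [hWcast, hWcast]
        exact hW'mono i' j' hij'
    · -- γ-const
      intro i
      induction i using Fin.lastCases with
      | last =>
        rw [hWlast]; intro v hv v' hv'
        exact congrArg Prod.fst (hWlσ v hv v' hv')
      | cast i =>
        rw [hWcast]; intro v hv v' hv'
        exact congrArg Prod.fst (hW'γ i v hv v' hv')
    · -- cost
      set Bt4 := Btop.filter (fun e => e.2 ∈ Wl) with hBt4def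
      have hdisjW' : ∀ i j : Fin k, i ≠ j → Disjoint (W' i) (W' j) := fun i j hij =>
        Finset.disjoint_of_subset_left (hW'sub i)
          (Finset.disjoint_of_subset_right (hW'sub j) (hdisj' i j hij))
      have hpdW : (↑(Finset.univ : Finset (Fin k)) : Set (Fin k)).PairwiseDisjoint W' :=
        fun i _ j _ hij => hdisjW' i j hij
      have hpdV : (↑(Finset.univ : Finset (Fin k)) : Set (Fin k)).PairwiseDisjoint
          (fun i : Fin k => V i.castSucc) := fun i _ j _ hij => hdisj' i j hij
      set allVlow : Finset V_ := Finset.univ.biUnion (fun i : Fin k => V i.castSucc) with hallVlowdef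
      -- summing fiber counts over a disjoint family
      have hsum_classes : ∀ (Bt : Finset (V_ × V_)) (F : Fin k → Finset V_),
          (↑(Finset.univ : Finset (Fin k)) : Set (Fin k)).PairwiseDisjoint F →
          ∑ i : Fin k, (Bt.filter (fun e => e.1 ∈ F i)).card
            = (Bt.filter (fun e => e.1 ∈ Finset.univ.biUnion F)).card := by
        intro Bt F hpd
        have h1 : ∀ i : Fin k, (Bt.filter (fun e => e.1 ∈ F i)).card
            = ∑ u ∈ F i, (Bt.filter (fun e => e.1 = u)).card :=
          fun i => (fiber_fst Bt (F i)).symm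
        rw [Finset.sum_congr rfl (fun i _ => h1 i), ← Finset.sum_biUnion hpd]
        exact fiber_fst Bt _
      -- pair identities
      have hpair_low : ∀ i j : Fin k,
          B.filter (fun e => e.1 ∈ W' i ∧ e.2 ∈ W' j)
            = Blow.filter (fun e => e.1 ∈ W' i ∧ e.2 ∈ W' j) := by
        intro i j
        ext e
        simp only [hBlowdef, Finset.mem_filter]
        constructor
        · rintro ⟨hB, h1, h2⟩
          refine ⟨⟨hB, ?_⟩, h1, h2⟩
          intro hc
          have h2' : e.2 ∈ V j.castSucc := hW'sub j h2
          have : j.castSucc ≠ last := ne_of_lt (Fin.castSucc_lt_last j)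
          exact (Finset.disjoint_left.mp (hdisj _ _ this)) h2' hc
        · rintro ⟨⟨hB, _⟩, h1, h2⟩
          exact ⟨hB, h1, h2⟩
      have hpair_top : ∀ i : Fin k,
          B.filter (fun e => e.1 ∈ W' i ∧ e.2 ∈ Wl) = Bt4.filter (fun e => e.1 ∈ W' i) := by
        intro i
        ext e
        simp only [hBt4def, hBtopdef, Finset.mem_filter]
        constructor
        · rintro ⟨hB, h1, h2⟩
          exact ⟨⟨⟨hB, hXsub (hWlsub h2)⟩, h2⟩, h1⟩
        · rintro ⟨⟨⟨hB, _⟩, h2⟩, h1⟩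
          exact ⟨hB, h1, h2⟩
      have hBt4allW : Bt4.filter (fun e => e.1 ∈ allW) = Bt3.filter (fun e => e.2 ∈ Wl) := by
        rw [hBt4def, hBt3def]
        exact Finset.filter_comm _ _ _
      have hBt2allW : Bt2.filter (fun e => e.1 ∈ allW) = Bt3.filter (fun e => e.2 ∈ X) := by
        rw [hBt2def, hBt3def]
        exact Finset.filter_comm _ _ _
      -- every edge of Btop has e.1 in the lower union
      have hBtopfst : ∀ e ∈ Btop, e.1 ∈ allVlow := by
        intro e he
        have heB := (Finset.mem_filter.mp he).1
        have hel := (Finset.mem_filter.mp he).2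
        obtain ⟨i, j, hij, h1, h2⟩ := hsupp e heB
        have hjl : j = last := by
          by_contra hc
          exact (Finset.disjoint_left.mp (hdisj _ _ hc)) h2 hel
        subst hjl
        have hine : i ≠ last := ne_of_lt hij
        obtain ⟨i', rfl⟩ := (Fin.eq_castSucc_or_eq_last i).resolve_right hine
        exact Finset.mem_biUnion.mpr ⟨i', Finset.mem_univ _, h1⟩
      have hBt2all : Bt2.filter (fun e => e.1 ∈ allVlow) = Bt2 := by
        apply Finset.filter_true_of_mem
        intro e he
        exact hBtopfst e ((Finset.filter_subset _ _) he)
      -- real-valued abbreviations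
      set P2 : ℝ := ∑ i : Fin k, ∑ j : Fin k,
        if i < j then ((Blow.filter (fun e => e.1 ∈ W' i ∧ e.2 ∈ W' j)).card : ℝ) else 0 with hP2def
      set SWo : ℝ := ∑ i : Fin k, ∑ v ∈ W' i, ω v with hSWodef
      set Xo : ℝ := ∑ w ∈ X, ω w with hXodef
      set VLo : ℝ := ∑ v ∈ V last, ω v with hVLodef
      set TotL : ℝ := ∑ i : Fin k, ∑ v ∈ V i.castSucc, ω v with hTotLdef
      set c1 : ℝ := ((Bt3.filter (fun e => e.2 ∈ X)).card : ℝ) with hc1def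
      set c2 : ℝ := (Bt2.card : ℝ) with hc2def
      set dwl : ℝ := ((Bt3.filter (fun e => e.2 ∈ Wl)).card : ℝ) with hdwldef
      set wo : ℝ := ∑ w ∈ Wl, ω w with hwodef
      set bl : ℝ := (Blow.card : ℝ) with hbldef
      set bt : ℝ := (Btop.card : ℝ) with hbtdef
      -- ω' sums over families
      have hA : ∀ (F : Fin k → Finset V_),
          ∑ i : Fin k, ∑ v ∈ F i, ω' v
            = (∑ i : Fin k, ∑ v ∈ F i, ω v)
              + (t:ℝ)/m * ∑ i : Fin k, ((Bt2.filter (fun e => e.1 ∈ F i)).card : ℝ) := by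
        intro F
        have hi : ∀ i : Fin k, ∑ v ∈ F i, ω' v
            = ∑ v ∈ F i, ω v + (t:ℝ)/m * ((Bt2.filter (fun e => e.1 ∈ F i)).card : ℝ) := by
          intro i
          simp only [hω'def]
          rw [Finset.sum_add_distrib, ← Finset.mul_sum]
          congr 1
          rw [← Nat.cast_sum, fiber_fst Bt2 (F i)]
        rw [Finset.sum_congr rfl (fun i _ => hi i), Finset.sum_add_distrib, ← Finset.mul_sum]
      have hSWω' : ∑ i : Fin k, ∑ v ∈ W' i, ω' v = SWo + (t:ℝ)/m * c1 := by
        rw [hA W']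
        congr 1
        rw [← Nat.cast_sum, hsum_classes Bt2 W' hpdW, ← hallWdef, hBt2allW]
      have hTotω' : ∑ i : Fin k, ∑ v ∈ V i.castSucc, ω' v = TotL + (t:ℝ)/m * c2 := by
        rw [hA (fun i => V i.castSucc)]
        congr 1
        rw [← Nat.cast_sum, hsum_classes Bt2 (fun i => V i.castSucc) hpdV, ← hallVlowdef,
          hBt2all]
      -- f-sums
      have hXf₁ : ∑ w ∈ X, f₁ w = c1 + Xo := by
        simp only [hf₁def]
        rw [Finset.sum_add_distrib, ← Nat.cast_sum, fiber_snd Bt3 X]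
      have hWlf₁ : ∑ w ∈ Wl, f₁ w = dwl + wo := by
        simp only [hf₁def]
        rw [Finset.sum_add_distrib, ← Nat.cast_sum, fiber_snd Bt3 Wl]
      have hXf₀ : ∑ w ∈ X, f₀ w = (t:ℝ)*(t:ℝ)/(n:ℝ) * c2 + (t:ℝ) * Xo := by
        simp only [hf₀def]
        rw [Finset.sum_add_distrib, ← Finset.mul_sum, ← Finset.mul_sum,
          ← Nat.cast_sum, fiber_snd Btop X]
      have hVlf₀ : ∑ w ∈ V last, f₀ w = (t:ℝ)*(t:ℝ)/(n:ℝ) * bt + (t:ℝ) * VLo := by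
        simp only [hf₀def]
        rw [Finset.sum_add_distrib, ← Finset.mul_sum, ← Finset.mul_sum,
          ← Nat.cast_sum, fiber_snd Btop (V last)]
        have : Btop.filter (fun e => e.2 ∈ V last) = Btop :=
          Finset.filter_true_of_mem (fun e he => (Finset.mem_filter.mp he).2)
        rw [this]
      -- goal decompositions
      have hSP : (∑ i : Fin (k+1), ∑ j : Fin (k+1),
            if i < j then ((B.filter (fun e => e.1 ∈ W i ∧ e.2 ∈ W j)).card : ℝ) else 0)
          = P2 + dwl := by
        have hrow : ∀ i : Fin k,
            (∑ j : Fin (k+1), if i.castSucc < j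
              then ((B.filter (fun e => e.1 ∈ W i.castSucc ∧ e.2 ∈ W j)).card : ℝ) else 0)
            = (∑ j : Fin k, if i < j
                then ((Blow.filter (fun e => e.1 ∈ W' i ∧ e.2 ∈ W' j)).card : ℝ) else 0)
              + ((Bt4.filter (fun e => e.1 ∈ W' i)).card : ℝ) := by
          intro i
          rw [Fin.sum_univ_castSucc (f := fun j => if i.castSucc < j
            then ((B.filter (fun e => e.1 ∈ W i.castSucc ∧ e.2 ∈ W j)).card : ℝ) else 0)]
          congr 1
          · apply Finset.sum_congr rfl
            intro j _
            rw [hWcast i, hWcast j]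
            by_cases h : i < j
            · rw [if_pos (Fin.castSucc_lt_castSucc_iff.mpr h), if_pos h, hpair_low i j]
            · rw [if_neg (fun hc => h (Fin.castSucc_lt_castSucc_iff.mp hc)), if_neg h]
          · rw [if_pos (Fin.castSucc_lt_last i), ← hlastdef, hWlast, hWcast i, hpair_top i]
        rw [Fin.sum_univ_castSucc (f := fun i => ∑ j : Fin (k+1), if i < j
          then ((B.filter (fun e => e.1 ∈ W i ∧ e.2 ∈ W j)).card : ℝ) else 0)]
        have hrowlast : (∑ j : Fin (k+1), if Fin.last k < j
            then ((B.filter (fun e => e.1 ∈ W (Fin.last k) ∧ e.2 ∈ W j)).card : ℝ) else 0)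
            = 0 := by
          apply Finset.sum_eq_zero
          intro j _
          rw [if_neg (not_lt.mpr (Fin.le_last j))]
        rw [hrowlast, add_zero, Finset.sum_congr rfl (fun i _ => hrow i),
          Finset.sum_add_distrib]
        congr 1
        rw [← Nat.cast_sum, hsum_classes Bt4 W' hpdW, ← hallWdef, hBt4allW]
      have hSW : (∑ i : Fin (k+1), ∑ v ∈ W i, ω v) = SWo + wo := by
        rw [Fin.sum_univ_castSucc (f := fun i => ∑ v ∈ W i, ω v)]
        congr 1
        · exact Finset.sum_congr rfl (fun i _ => by rw [hWcast i])
        · rw [← hlastdef, hWlast, hwodef]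
      have hTotsplit : (∑ i : Fin (k+1), ∑ v ∈ V i, ω v) = TotL + VLo := by
        rw [Fin.sum_univ_castSucc (f := fun i => ∑ v ∈ V i, ω v), ← hlastdef]
      have hBr : (B.card : ℝ) = bt + bl := by
        rw [hbtdef, hbldef, ← Nat.cast_add, hBsplit]
      -- nonnegativity
      have hc10 : 0 ≤ c1 := Nat.cast_nonneg _
      have hc20 : 0 ≤ c2 := Nat.cast_nonneg _
      have hdwl0 : 0 ≤ dwl := Nat.cast_nonneg _
      have hwo0 : 0 ≤ wo := Finset.sum_nonneg (fun w _ => hω w)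
      have hXo0 : 0 ≤ Xo := Finset.sum_nonneg (fun w _ => hω w)
      have hVLo0 : 0 ≤ VLo := Finset.sum_nonneg (fun w _ => hω w)
      have hTotL0 : 0 ≤ TotL :=
        Finset.sum_nonneg (fun i _ => Finset.sum_nonneg (fun v _ => hω v))
      have hSWo0 : 0 ≤ SWo :=
        Finset.sum_nonneg (fun i _ => Finset.sum_nonneg (fun v _ => hω v))
      have hP20 : 0 ≤ P2 := by
        rw [hP2def]
        apply Finset.sum_nonneg
        intro i _
        apply Finset.sum_nonneg
        intro j _
        by_cases h : i < j
        · rw [if_pos h]; exact Nat.cast_nonneg _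
        · rw [if_neg h]
      have hbl0 : 0 ≤ bl := Nat.cast_nonneg _
      have hbt0 : 0 ≤ bt := Nat.cast_nonneg _
      -- hypotheses for `assemble`
      have harith1 : (m:ℝ) ≤ (1+α/3)*((m:ℝ) - (L:ℝ)*((t-1:ℕ):ℝ)) := by
        have := arith_slack α L t hα hα1 hL1 ht
        rwa [← hmval] at this
      have hWlsum' : ((m:ℝ) - (L:ℝ)*((t-1:ℕ):ℝ)) * (dwl + wo) ≤ (t:ℝ) * (c1 + Xo) := by
        have h5 := hWlsum
        rw [hXcard, hXf₁, hWlf₁] at h5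
        exact h5
      have hXavg' : (n:ℝ) * ((t:ℝ)*(t:ℝ)/(n:ℝ) * c2 + (t:ℝ) * Xo)
          ≤ (m:ℝ) * ((t:ℝ)*(t:ℝ)/(n:ℝ) * bt + (t:ℝ) * VLo) := by
        have h5 := hXavg
        rw [hXf₀, hVlf₀, hVlastcard] at h5
        exact h5
      have hcost : P2 + (SWo + (t:ℝ)/(m:ℝ) * c1)
          ≤ (1+α/3)*((t:ℝ)^2*bl/(n:ℝ)^2 + (t:ℝ)*(TotL + (t:ℝ)/(m:ℝ) * c2)/(n:ℝ)) := by
        have h5 := hW'cost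
        rw [hSWω', hTotω'] at h5
        exact h5
      rw [hSP, hSW, hTotsplit, hBr]
      exact assemble α (t:ℝ) (m:ℝ) (n:ℝ) P2 SWo Xo VLo TotL c1 c2 dwl wo bl bt
        (L:ℝ) ((t-1:ℕ):ℝ) hα hα1 hmpos hnpos hP20 hSWo0 hXo0 hVLo0 hTotL0 hc10 hc20
        hdwl0 hwo0 hbl0 hbt0 (Nat.cast_nonneg t) harith1 hWlsum' hXavg' hcost

end Core

/-- quantitative undesirability-preserving Ramsey for charts:
there is `R(s,k,t,α)` such that in any `k`-partite chart with `s` colors, `n ≥ R`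
vertices per class, and a set `B` of undesirable edges of size at most `ε·C(k,2)·n²`,
one can pick `W_i ⊆ V_i` of size `t` that are pairwise monochromatic, containing at
most `(1+α)·ε·C(k,2)·t²` undesirable edges. -/
theorem quantitative_chart_ramsey :
    ∃ R : ℕ → ℕ → ℕ → ℝ → ℕ,
      ∀ (V_ C : Type) [Fintype V_] [DecidableEq V_] [Fintype C] [DecidableEq C]
        (k t n : ℕ) (a ε : ℝ), 0 < a → a ≤ 1 → 0 ≤ ε →
        ∀ (V : Fin k → Finset V_) (c : V_ → V_ → C) (B : Finset (V_ × V_)),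
          (∀ i j, i ≠ j → Disjoint (V i) (V j)) →
          (∀ i, (V i).card = n) →
          R (Fintype.card C) k t a ≤ n →
          (∀ e ∈ B, ∃ i j : Fin k, i < j ∧ e.1 ∈ V i ∧ e.2 ∈ V j) →
          (B.card : ℝ) ≤ ε * (k.choose 2) * n ^ 2 →
          ∃ W : Fin k → Finset V_,
            (∀ i, W i ⊆ V i) ∧
            (∀ i, (W i).card = t) ∧
            (∀ i j : Fin k, i < j →
              ∀ v ∈ W i, ∀ w ∈ W j, ∀ v' ∈ W i, ∀ w' ∈ W j, c v w = c v' w') ∧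
            (((B.filter (fun e => ∃ i j : Fin k, i < j ∧ e.1 ∈ W i ∧ e.2 ∈ W j)).card : ℝ)
              ≤ (1 + a) * ε * (k.choose 2) * t ^ 2) := by
  classical
  refine ⟨fun s k t a => Rcore k s 1 t a, ?_⟩
  intro V_ C _ _ _ _ k t n a ε ha ha1 hε V c B hdisj hcard hR hsupp hB
  have hn1 : 1 ≤ n := le_trans (Rcore_pos _ _ _ _ _) hR
  have hnpos : (0:ℝ) < (n:ℝ) := by exact_mod_cast hn1
  have hchoose0 : (0:ℝ) ≤ ((k.choose 2 : ℕ) : ℝ) := Nat.cast_nonneg _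
  rcases Nat.eq_zero_or_pos t with rfl | ht
  · -- t = 0
    refine ⟨fun _ => ∅, fun i => Finset.empty_subset _, fun i => Finset.card_empty,
      fun i j _ v hv => absurd hv (Finset.notMem_empty v), ?_⟩
    have hfe : B.filter (fun e => ∃ i j : Fin k, i < j ∧ e.1 ∈ (∅ : Finset V_) ∧ e.2 ∈ (∅ : Finset V_)) = ∅ := by
      apply Finset.filter_false_of_mem
      rintro e _ ⟨i, j, _, h1, _⟩
      exact absurd h1 (Finset.notMem_empty _)
    rw [hfe]
    simp
  · -- t ≥ 1
    obtain ⟨W, hWsub, hWcard, hWmono, _, hWcost⟩ :=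
      core k (Fintype.card C) 1 t a ha ha1 ht V_ C Unit (le_refl _) n V c (fun _ => ())
        B (fun _ => 0) (fun _ => le_refl 0) hdisj hcard
        (fun i => Finset.card_le_one.mpr (fun x _ y _ => Subsingleton.elim x y))
        hR hsupp
    refine ⟨W, hWsub, hWcard, hWmono, ?_⟩
    -- the zero weights vanish
    have hzero1 : (∑ i : Fin k, ∑ v ∈ W i, (0:ℝ)) = 0 := by simp
    have hzero2 : (∑ i : Fin k, ∑ v ∈ V i, (0:ℝ)) = 0 := by simp
    rw [hzero1, hzero2, add_zero] at hWcost
    have hWcost' : (∑ i : Fin k, ∑ j : Fin k,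
        if i < j then ((B.filter (fun e => e.1 ∈ W i ∧ e.2 ∈ W j)).card : ℝ) else 0)
        ≤ (1+a) * ((t:ℝ)^2 * B.card / (n:ℝ)^2) := by
      calc (∑ i : Fin k, ∑ j : Fin k,
          if i < j then ((B.filter (fun e => e.1 ∈ W i ∧ e.2 ∈ W j)).card : ℝ) else 0)
          ≤ (1+a) * ((t:ℝ)^2 * B.card / (n:ℝ)^2 + (t:ℝ) * 0 / n) := hWcost
        _ = (1+a) * ((t:ℝ)^2 * B.card / (n:ℝ)^2) := by ring
    -- bound the filtered card by the pair sum
    have hsubset : B.filter (fun e => ∃ i j : Fin k, i < j ∧ e.1 ∈ W i ∧ e.2 ∈ W j)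
        ⊆ ((Finset.univ : Finset (Fin k × Fin k)).filter (fun p => p.1 < p.2)).biUnion
            (fun p => B.filter (fun e => e.1 ∈ W p.1 ∧ e.2 ∈ W p.2)) := by
      intro e he
      obtain ⟨heB, i, j, hij, h1, h2⟩ := Finset.mem_filter.mp he
      exact Finset.mem_biUnion.mpr ⟨(i, j),
        Finset.mem_filter.mpr ⟨Finset.mem_univ _, hij⟩,
        Finset.mem_filter.mpr ⟨heB, h1, h2⟩⟩
    have hcard1 : (B.filter (fun e => ∃ i j : Fin k, i < j ∧ e.1 ∈ W i ∧ e.2 ∈ W j)).card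
        ≤ ∑ p ∈ (Finset.univ : Finset (Fin k × Fin k)).filter (fun p => p.1 < p.2),
            (B.filter (fun e => e.1 ∈ W p.1 ∧ e.2 ∈ W p.2)).card :=
      le_trans (Finset.card_le_card hsubset) (Finset.card_biUnion_le)
    have hcard2 : ((B.filter (fun e => ∃ i j : Fin k, i < j ∧ e.1 ∈ W i ∧ e.2 ∈ W j)).card : ℝ)
        ≤ (∑ i : Fin k, ∑ j : Fin k,
            if i < j then ((B.filter (fun e => e.1 ∈ W i ∧ e.2 ∈ W j)).card : ℝ) else 0) := by
      have h1 : (∑ p ∈ (Finset.univ : Finset (Fin k × Fin k)).filter (fun p => p.1 < p.2),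
            ((B.filter (fun e => e.1 ∈ W p.1 ∧ e.2 ∈ W p.2)).card : ℝ))
          = ∑ p : Fin k × Fin k,
              if p.1 < p.2 then ((B.filter (fun e => e.1 ∈ W p.1 ∧ e.2 ∈ W p.2)).card : ℝ) else 0 :=
        Finset.sum_filter _ _
      have h2 : (∑ p : Fin k × Fin k,
            if p.1 < p.2 then ((B.filter (fun e => e.1 ∈ W p.1 ∧ e.2 ∈ W p.2)).card : ℝ) else 0)
          = ∑ i : Fin k, ∑ j : Fin k,
              if i < j then ((B.filter (fun e => e.1 ∈ W i ∧ e.2 ∈ W j)).card : ℝ) else 0 :=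
        Fintype.sum_prod_type _
      calc ((B.filter (fun e => ∃ i j : Fin k, i < j ∧ e.1 ∈ W i ∧ e.2 ∈ W j)).card : ℝ)
          ≤ (∑ p ∈ (Finset.univ : Finset (Fin k × Fin k)).filter (fun p => p.1 < p.2),
              ((B.filter (fun e => e.1 ∈ W p.1 ∧ e.2 ∈ W p.2)).card : ℝ)) := by
            have hcast : ((B.filter (fun e => ∃ i j : Fin k, i < j ∧ e.1 ∈ W i ∧ e.2 ∈ W j)).card : ℝ)
                ≤ ((∑ p ∈ (Finset.univ : Finset (Fin k × Fin k)).filter (fun p => p.1 < p.2),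
                    (B.filter (fun e => e.1 ∈ W p.1 ∧ e.2 ∈ W p.2)).card : ℕ) : ℝ) :=
              Nat.cast_le.mpr hcard1
            rwa [Nat.cast_sum] at hcast
        _ = _ := by rw [h1, h2]
    -- final numeric bound
    have hfinal : (1+a) * ((t:ℝ)^2 * B.card / (n:ℝ)^2) ≤ (1 + a) * ε * (k.choose 2) * t ^ 2 := by
      have h3 : (t:ℝ)^2 * B.card / (n:ℝ)^2 ≤ ε * (k.choose 2) * t ^ 2 := by
        rw [div_le_iff₀ (by positivity)]
        nlinarith [hB, sq_nonneg (t:ℝ), hnpos]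
      calc (1+a) * ((t:ℝ)^2 * B.card / (n:ℝ)^2)
          ≤ (1+a) * (ε * (k.choose 2) * t ^ 2) := by
            exact mul_le_mul_of_nonneg_left h3 (by linarith)
        _ = (1 + a) * ε * (k.choose 2) * t ^ 2 := by ring
    exact le_trans hcard2 (le_trans hWcost' hfinal)
end

section
/- For any α > 0, m, k, and all sufficiently large l, there exist infinitely many n for which there is a graph G on n vertices and a set B of at most (1/(mk))·C(n,2) 'undesirable' pairs of vertices, such that G has no independent set of size l, and every clique on l vertices in G contains at least (1/m − α)·C(l,2) pairs from B. (Construction: G is a disjoint union of k cliques of n/k vertices each, and B is the edge set of mk vertex-disjoint cliques of n/(mk) vertices each, m of them inside each clique of G, for n a multiple of mk with n > lk.) -/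
open Finset

lemma card_pairs_lt {γ : Type*} [LinearOrder γ] [DecidableEq γ] (A : Finset γ) :
    ((A ×ˢ A).filter fun e => e.1 < e.2).card = A.card.choose 2 := by
  rw [← Finset.card_powersetCard 2 A]
  apply Finset.card_bij (fun e _ => ({e.1, e.2} : Finset γ))
  · rintro ⟨x, y⟩ he
    simp only [mem_filter, mem_product] at he
    refine Finset.mem_powersetCard.2 ⟨?_, ?_⟩
    · intro z hz; simp only [mem_insert, mem_singleton] at hz
      rcases hz with h|h <;> simp [h, he.1.1, he.1.2]
    · rw [Finset.card_insert_of_notMem (by simp [he.2.ne]), Finset.card_singleton]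
  · rintro ⟨x, y⟩ he ⟨x', y'⟩ he' h
    simp only [mem_filter, mem_product] at he he'
    have h1 : x = x' ∨ x = y' := by
      have : x ∈ ({x', y'} : Finset γ) := h ▸ (by simp)
      simpa using this
    have h1' : x' = x ∨ x' = y := by
      have : x' ∈ ({x, y} : Finset γ) := h ▸ (by simp)
      simpa using this
    have h2 : y = x' ∨ y = y' := by
      have : y ∈ ({x', y'} : Finset γ) := h ▸ (by simp)
      simpa using this
    have hx : x = x' := by
      rcases h1 with h1 | h1
      · exact h1
      · rcases h1' with h1' | h1'
        · exact h1'.symm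
        · subst h1; subst h1'; exact (lt_asymm he.2 he'.2).elim
    have hy : y = y' := by
      rcases h2 with h2 | h2
      · subst h2; subst hx; exact (lt_irrefl _ he.2).elim
      · exact h2
    rw [Prod.mk.injEq]; exact ⟨hx, hy⟩
  · intro p hp
    rw [Finset.mem_powersetCard] at hp
    obtain ⟨x, y, hxy, rfl⟩ := Finset.card_eq_two.1 hp.2
    have hxA : x ∈ A := hp.1 (by simp)
    have hyA : y ∈ A := hp.1 (by simp)
    rcases hxy.lt_or_gt with h|h
    · exact ⟨(x, y), by simp [mem_filter, h, hxA, hyA], rfl⟩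
    · exact ⟨(y, x), by simp [mem_filter, h, hxA, hyA], Finset.pair_comm y x⟩

lemma card_residue_class (q t c : ℕ) (hq : 0 < q) (hc : c < q) :
    ((univ : Finset (Fin (q * t))).filter fun v => v.val % q = c).card = t := by
  have key : ((univ : Finset (Fin (q * t))).filter fun v => v.val % q = c).card
      = (Finset.range t).card := by
    apply Finset.card_bij (fun v _ => v.val / q)
    · rintro v hv
      simp only [mem_filter] at hv
      rw [Finset.mem_range, Nat.div_lt_iff_lt_mul hq]
      exact Nat.lt_of_lt_of_le v.isLt (le_of_eq (Nat.mul_comm q t))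
    · rintro v hv w hw h
      simp only [mem_filter] at hv hw
      have h2 : v.val % q + q * (v.val / q) = v.val := Nat.mod_add_div _ _
      have h3 : w.val % q + q * (w.val / q) = w.val := Nat.mod_add_div _ _
      have h4 : q * (v.val / q) = q * (w.val / q) := by rw [h]
      exact Fin.ext (by omega)
    · intro j hj
      rw [Finset.mem_range] at hj
      have hlt : c + j * q < q * t := by
        calc c + j * q < q + j * q := by omega
        _ = (j + 1) * q := by ring
        _ ≤ t * q := Nat.mul_le_mul_right q (by omega)
        _ = q * t := Nat.mul_comm _ _
      refine ⟨⟨c + j * q, hlt⟩, ?_, ?_⟩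
      · simp [Nat.add_mul_mod_self_right, Nat.mod_eq_of_lt hc]
      · simp [Nat.add_mul_div_right _ _ hq, Nat.div_eq_of_lt hc]
  rw [key, Finset.card_range]

lemma card_pairs_res (n q : ℕ) (hq : 0 < q) (S : Finset (Fin n)) :
    ((univ : Finset (Fin n × Fin n)).filter fun e =>
        (e.1 < e.2 ∧ e.1.val % q = e.2.val % q) ∧ e.1 ∈ S ∧ e.2 ∈ S).card
      = ∑ c ∈ Finset.range q, ((S.filter fun v => v.val % q = c).card).choose 2 := by
  have hdecomp : ((univ : Finset (Fin n × Fin n)).filter fun e =>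
        (e.1 < e.2 ∧ e.1.val % q = e.2.val % q) ∧ e.1 ∈ S ∧ e.2 ∈ S)
      = (Finset.range q).biUnion (fun c =>
          ((S.filter fun v => v.val % q = c) ×ˢ (S.filter fun v => v.val % q = c)).filter
            fun e => e.1 < e.2) := by
    ext e
    simp only [mem_filter, mem_univ, true_and, Finset.mem_biUnion, Finset.mem_range,
      mem_product]
    constructor
    · rintro ⟨⟨hlt, hres⟩, h1, h2⟩
      exact ⟨e.1.val % q, Nat.mod_lt _ hq, ⟨⟨h1, rfl⟩, ⟨h2, hres.symm⟩⟩, hlt⟩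
    · rintro ⟨c, _, ⟨⟨h1, hc1⟩, ⟨h2, hc2⟩⟩, hlt⟩
      exact ⟨⟨hlt, by rw [hc1, hc2]⟩, h1, h2⟩
  rw [hdecomp, Finset.card_biUnion]
  · exact Finset.sum_congr rfl fun c _ => card_pairs_lt _
  · intro c _ d _ hcd
    rw [Function.onFun, Finset.disjoint_left]
    rintro e he he'
    simp only [mem_filter, mem_product] at he he'
    exact hcd (he.1.1.2.symm.trans he'.1.1.2)


/-- no quantitative Ramsey in the non-partite setting. For any `α > 0`, `m`, `k`
and all sufficiently large `l`, there are infinitely many `n` admitting a graph `G` on `n`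
vertices and a set `B` of at most `(1/(mk))·C(n,2)` undesirable pairs (each recorded as an
ordered pair with increasing endpoints) such that `G` has no independent set of size `l`
and every clique on `l` vertices contains at least `(1/m − α)·C(l,2)` pairs of `B`. -/
theorem no_quantitative_ramsey (a : ℝ) (ha : 0 < a) (m k : ℕ) (hm : 0 < m) (hk : 0 < k) :
    ∃ l₀ : ℕ, ∀ l : ℕ, l₀ ≤ l → ∀ N : ℕ, ∃ n : ℕ, N ≤ n ∧
      ∃ (G : SimpleGraph (Fin n)) (B : Finset (Fin n × Fin n)),
        (∀ e ∈ B, e.1 < e.2) ∧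
        (B.card : ℝ) ≤ (1 / (m * k : ℝ)) * (n.choose 2) ∧
        (Gᶜ).CliqueFree l ∧
        (∀ s : Finset (Fin n), G.IsNClique l s →
          ((1 / (m : ℝ)) - a) * (l.choose 2)
            ≤ ((B.filter (fun e => e.1 ∈ s ∧ e.2 ∈ s)).card : ℝ)) := by
  set q := m * k with hq_def
  have hq : 0 < q := Nat.mul_pos hm hk
  refine ⟨max (k + 1) (⌈1/a⌉₊ + 2), fun l hl N => ?_⟩
  have hlk : k + 1 ≤ l := le_trans (le_max_left _ _) hl
  have hlc : ⌈1/a⌉₊ + 2 ≤ l := le_trans (le_max_right _ _) hl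
  set t := max N 1 with ht_def
  have ht : 1 ≤ t := le_max_right _ _
  refine ⟨q * t, le_trans (le_max_left N 1) (Nat.le_mul_of_pos_left t hq), ?_⟩
  set n := q * t with hn_def
  refine ⟨⟨fun v w => v ≠ w ∧ v.val % k = w.val % k, ⟨fun v w h => ⟨h.1.symm, h.2.symm⟩⟩,
    ⟨fun v h => h.1 rfl⟩⟩,
    (univ : Finset (Fin n × Fin n)).filter (fun e => e.1 < e.2 ∧ e.1.val % q = e.2.val % q),
    ?_, ?_, ?_, ?_⟩
  · intro e he
    exact ((Finset.mem_filter.1 he).2).1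
  · -- cardinality of B
    have hB : ((univ : Finset (Fin n × Fin n)).filter
        (fun e => e.1 < e.2 ∧ e.1.val % q = e.2.val % q)).card = q * t.choose 2 := by
      have : ((univ : Finset (Fin n × Fin n)).filter
          (fun e => e.1 < e.2 ∧ e.1.val % q = e.2.val % q))
          = ((univ : Finset (Fin n × Fin n)).filter
            (fun e => (e.1 < e.2 ∧ e.1.val % q = e.2.val % q) ∧ e.1 ∈ (univ : Finset (Fin n))
              ∧ e.2 ∈ (univ : Finset (Fin n)))) := by
        simp
      rw [this, card_pairs_res n q hq univ]
      rw [Finset.sum_congr rfl (fun c hc =>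
        by rw [card_residue_class q t c hq (Finset.mem_range.1 hc)])]
      rw [Finset.sum_const, Finset.card_range, smul_eq_mul]
    rw [hB]
    have ht' : (1:ℝ) ≤ (t:ℝ) := by exact_mod_cast ht
    have hq' : (1:ℝ) ≤ (q:ℝ) := by exact_mod_cast hq
    have hqk : ((m:ℝ) * k) = (q:ℝ) := by rw [hq_def]; push_cast; ring
    have hnq : ((n:ℝ)) = (q:ℝ) * t := by rw [hn_def]; push_cast; ring
    rw [Nat.cast_mul, Nat.cast_choose_two, Nat.cast_choose_two, hqk, hnq,
      one_div_mul_eq_div, le_div_iff₀ (by positivity : (0:ℝ) < (q:ℝ))]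
    have h1 : (q:ℝ) * ((t:ℝ) - 1) ≤ (q:ℝ) * (t:ℝ) - 1 := by nlinarith
    nlinarith [mul_le_mul_of_nonneg_left h1 (by positivity : (0:ℝ) ≤ (q:ℝ) * (t:ℝ))]
  · -- clique-free of complement
    intro s hs
    have hinj : Set.InjOn (fun v : Fin n => v.val % k) s := by
      intro v hv w hw hvw
      by_contra hne
      have hadj := hs.1 hv hw hne
      rw [SimpleGraph.compl_adj] at hadj
      exact hadj.2 ⟨hne, hvw⟩
    have hcard : s.card ≤ k := by
      rw [← Finset.card_image_of_injOn hinj]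
      have hsub : s.image (fun v : Fin n => v.val % k) ⊆ Finset.range k := by
        intro x hx
        obtain ⟨v, _, rfl⟩ := Finset.mem_image.1 hx
        exact Finset.mem_range.2 (Nat.mod_lt _ hk)
      exact le_trans (Finset.card_le_card hsub) (by rw [Finset.card_range])
    have hc2 := hs.2
    omega
  · -- clique pair-count lower bound
    intro s hs
    have hl2 : 2 ≤ l := by omega
    have hcard : s.card = l := hs.2
    have hsne : s.Nonempty := Finset.card_pos.1 (by omega)
    obtain ⟨v0, hv0⟩ := hsne
    set r := v0.val % k with hr_def
    have hr : r < k := Nat.mod_lt _ hk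
    have hsame : ∀ v ∈ s, v.val % k = r := by
      intro v hv
      by_cases hvv : v = v0
      · rw [hvv]
      · exact (hs.1 hv hv0 hvv).2
    -- rewrite the filtered count
    have hcount : ((((univ : Finset (Fin n × Fin n)).filter
          (fun e => e.1 < e.2 ∧ e.1.val % q = e.2.val % q)).filter
          (fun e => e.1 ∈ s ∧ e.2 ∈ s)).card)
        = ∑ c ∈ Finset.range q, ((s.filter fun v => v.val % q = c).card).choose 2 := by
      rw [Finset.filter_filter]
      exact card_pairs_res n q hq s
    set D := (Finset.range q).filter (fun c => c % k = r) with hD_def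
    have hDsub : D ⊆ Finset.range q := Finset.filter_subset _ _
    have hkq : k ∣ q := Dvd.intro_left m rfl
    have hDcard : D.card = m := by
      have key : D.card = (Finset.range m).card := by
        apply (Finset.card_bij (fun c _ => c / k) ?_ ?_ ?_)
        · intro c hc
          simp only [hD_def, Finset.mem_filter, Finset.mem_range] at hc
          rw [Finset.mem_range, Nat.div_lt_iff_lt_mul hk]
          exact hc.1
        · intro c hc d hd h
          simp only [hD_def, Finset.mem_filter, Finset.mem_range] at hc hd
          have h2 : c % k + k * (c / k) = c := Nat.mod_add_div _ _
          have h3 : d % k + k * (d / k) = d := Nat.mod_add_div _ _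
          have h' : c / k = d / k := h
          have h4 : k * (c / k) = k * (d / k) := by rw [h']
          omega
        · intro j hj
          rw [Finset.mem_range] at hj
          refine ⟨r + j * k, ?_, ?_⟩
          · simp only [hD_def, Finset.mem_filter, Finset.mem_range]
            constructor
            · calc r + j * k < k + j * k := by omega
              _ = (j + 1) * k := by ring
              _ ≤ m * k := Nat.mul_le_mul_right k (by omega)
              _ = q := hq_def.symm
            · simp [Nat.add_mul_mod_self_right, Nat.mod_eq_of_lt hr]
          · show (r + j * k) / k = j
            simp [Nat.add_mul_div_right _ _ hk, Nat.div_eq_of_lt hr]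
      rw [key, Finset.card_range]
    have hfiber : ∀ v ∈ s, v.val % q ∈ D := by
      intro v hv
      simp only [hD_def, Finset.mem_filter, Finset.mem_range]
      exact ⟨Nat.mod_lt _ hq, by rw [Nat.mod_mod_of_dvd _ hkq]; exact hsame v hv⟩
    have hsum : ∑ c ∈ D, (s.filter fun v => v.val % q = c).card = l := by
      rw [← hcard]
      exact (Finset.card_eq_sum_card_fiberwise hfiber).symm
    have hmono : ∑ c ∈ D, ((s.filter fun v => v.val % q = c).card).choose 2
        ≤ ∑ c ∈ Finset.range q, ((s.filter fun v => v.val % q = c).card).choose 2 :=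
      Finset.sum_le_sum_of_subset hDsub
    -- now the real analysis
    set f : ℕ → ℝ := fun c => ((s.filter fun v => v.val % q = c).card : ℝ) with hf_def
    have hf_nonneg : ∀ c, 0 ≤ f c := fun c => Nat.cast_nonneg _
    set S2 := ∑ c ∈ D, (f c) ^ 2 with hS2_def
    have hfsum : ∑ c ∈ D, f c = (l : ℝ) := by
      simp only [hf_def]
      exact_mod_cast hsum
    have hCS : ((l : ℝ)) ^ 2 ≤ (m : ℝ) * S2 := by
      have := sq_sum_le_card_mul_sum_sq (s := D) (f := f)
      rw [hfsum, hDcard] at this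
      exact_mod_cast this
    have hchoose : ∀ c ∈ D, (((s.filter fun v => v.val % q = c).card).choose 2 : ℝ)
        = f c * (f c - 1) / 2 := by
      intro c _
      rw [Nat.cast_choose_two]
    have hsum2 : ∑ c ∈ D, (((s.filter fun v => v.val % q = c).card).choose 2 : ℝ)
        = (S2 - l) / 2 := by
      rw [Finset.sum_congr rfl hchoose]
      rw [← hfsum, hS2_def, ← Finset.sum_div, ← Finset.sum_sub_distrib]
      congr 1
      exact Finset.sum_congr rfl (fun c _ => by ring)
    -- the chain of inequalities
    have hstep1 : (S2 - l) / 2 ≤ ((((univ : Finset (Fin n × Fin n)).filter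
          (fun e => e.1 < e.2 ∧ e.1.val % q = e.2.val % q)).filter
          (fun e => e.1 ∈ s ∧ e.2 ∈ s)).card : ℝ) := by
      rw [hcount, ← hsum2]
      calc ∑ c ∈ D, (((s.filter fun v => v.val % q = c).card).choose 2 : ℝ)
          ≤ ∑ c ∈ Finset.range q, (((s.filter fun v => v.val % q = c).card).choose 2 : ℝ) := by
            exact_mod_cast hmono
        _ = ((∑ c ∈ Finset.range q, ((s.filter fun v => v.val % q = c).card).choose 2 : ℕ) : ℝ) := by
            push_cast
            rfl
    refine le_trans ?_ hstep1
    -- final numeric inequality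
    have hM : (0:ℝ) < (m:ℝ) := by exact_mod_cast hm
    have hl2' : (2:ℝ) ≤ (l:ℝ) := by exact_mod_cast hl2
    have hal : 1 ≤ a * ((l:ℝ) - 1) := by
      have h1a : (1/a) ≤ (l:ℝ) - 1 := by
        refine le_trans (Nat.le_ceil (1/a)) ?_
        have : ((⌈1/a⌉₊ : ℝ)) + 2 ≤ (l:ℝ) := by exact_mod_cast hlc
        linarith
      calc (1:ℝ) = a * (1/a) := by field_simp
      _ ≤ a * ((l:ℝ) - 1) := mul_le_mul_of_nonneg_left h1a ha.le
    set u := 1 / (m:ℝ) with hu_def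
    have hu0 : 0 ≤ u := by positivity
    have hMu : (m:ℝ) * u = 1 := by rw [hu_def]; field_simp
    have hS2u : (l:ℝ)^2 * u ≤ S2 := by
      calc (l:ℝ)^2 * u ≤ ((m:ℝ) * S2) * u := mul_le_mul_of_nonneg_right hCS hu0
      _ = ((m:ℝ) * u) * S2 := by ring
      _ = S2 := by rw [hMu]; ring
    have hlpos : (0:ℝ) ≤ (l:ℝ) := by positivity
    have h1 : (l:ℝ) * 1 ≤ (l:ℝ) * (a * ((l:ℝ) - 1)) := mul_le_mul_of_nonneg_left hal hlpos
    rw [Nat.cast_choose_two]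
    have hu1 : u ≤ 1 := by
      rw [hu_def]
      rw [div_le_one hM]
      exact_mod_cast hm
    nlinarith [hS2u, h1, mul_nonneg hlpos hu0, mul_nonneg hu0 hlpos]
end

section
/- For any two partitions C and C' of the edge-colored complete graph G, where C' refines C, the index satisfies 0 ≤ ind(C) ≤ ind(C') ≤ 1. -/
open Finset

/-- Density of color `σ` between disjoint vertex sets `A` and `B` in the `Σ`-colored
complete graph with coloring `c`. -/
noncomputable def dens {V C : Type*} [DecidableEq V] [DecidableEq C]
    (c : V → V → C) (σ : C) (A B : Finset V) : ℝ :=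
  (((A ×ˢ B).filter (fun p => c p.1 p.2 = σ)).card : ℝ) / ((A.card : ℝ) * (B.card : ℝ))

/-- Index of a pair of disjoint vertex sets: sum of squared color densities. -/
noncomputable def indPair {V C : Type*} [DecidableEq V] [Fintype C] [DecidableEq C]
    (c : V → V → C) (A B : Finset V) : ℝ :=
  ∑ σ : C, (dens c σ A B) ^ 2

/-- Index of a partition `P = (V_1,…,V_k)`:
`∑_{i<j} (|V_i||V_j| / C(|V|,2)) · ind(V_i,V_j)`. -/
noncomputable def indPart {V C : Type*} [Fintype V] [DecidableEq V] [Fintype C] [DecidableEq C]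
    (c : V → V → C) {k : ℕ} (P : Fin k → Finset V) : ℝ :=
  ∑ p ∈ univ.filter (fun p : Fin k × Fin k => p.1 < p.2),
    (((P p.1).card : ℝ) * ((P p.2).card : ℝ) / ((Fintype.card V).choose 2 : ℝ))
      * indPair c (P p.1) (P p.2)

/-- `P` is a partition of the vertex set. -/
def IsPartition {V : Type*} [Fintype V] [DecidableEq V] {k : ℕ} (P : Fin k → Finset V) : Prop :=
  (∀ i j, i ≠ j → Disjoint (P i) (P j)) ∧ (∀ v : V, ∃ i, v ∈ P i)

/-- `P'` refines `P`: every part of `P'` is contained in some part of `P`. -/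
def Refines {V : Type*} {k k' : ℕ} (P' : Fin k' → Finset V) (P : Fin k → Finset V) : Prop :=
  ∀ j, ∃ i, P' j ⊆ P i

section Aux

variable {V C : Type*} [DecidableEq V] [DecidableEq C]

lemma dens_nonneg (c : V → V → C) (σ : C) (A B : Finset V) : 0 ≤ dens c σ A B := by
  unfold _root_.dens; positivity

lemma dens_le_one (c : V → V → C) (σ : C) (A B : Finset V) : dens c σ A B ≤ 1 := by
  unfold _root_.dens
  apply div_le_one_of_le₀
  · calc (((A ×ˢ B).filter (fun p => c p.1 p.2 = σ)).card : ℝ)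
        ≤ ((A ×ˢ B).card : ℝ) := Nat.cast_le.2 (card_filter_le _ _)
      _ = (A.card : ℝ) * (B.card : ℝ) := by rw [card_product]; push_cast; ring
  · positivity

lemma indPair_nonneg [Fintype C] (c : V → V → C) (A B : Finset V) : 0 ≤ indPair c A B :=
  Finset.sum_nonneg fun σ _ => sq_nonneg _

lemma sum_dens_le_one [Fintype C] (c : V → V → C) (A B : Finset V) :
    ∑ σ : C, dens c σ A B ≤ 1 := by
  unfold _root_.dens
  rw [← Finset.sum_div]
  apply div_le_one_of_le₀
  · have h : (A ×ˢ B).card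
        = ∑ σ : C, (((A ×ˢ B).filter (fun p => c p.1 p.2 = σ)).card) :=
      Finset.card_eq_sum_card_fiberwise (fun x (_ : x ∈ A ×ˢ B) => mem_univ (c x.1 x.2))
    replace h := h.symm
    calc (∑ σ : C, ((((A ×ˢ B).filter (fun p => c p.1 p.2 = σ)).card : ℝ)))
        = (((A ×ˢ B).card : ℝ)) := by exact_mod_cast congrArg (Nat.cast (R := ℝ)) h
      _ = (A.card : ℝ) * (B.card : ℝ) := by rw [card_product]; push_cast; ring
      _ ≤ (A.card : ℝ) * (B.card : ℝ) := le_rfl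
  · positivity

lemma indPair_le_one [Fintype C] (c : V → V → C) (A B : Finset V) : indPair c A B ≤ 1 := by
  unfold indPair
  calc ∑ σ : C, dens c σ A B ^ 2
      ≤ ∑ σ : C, dens c σ A B := by
        refine Finset.sum_le_sum fun σ _ => ?_
        have h := pow_le_pow_of_le_one (dens_nonneg c σ A B) (dens_le_one c σ A B)
          (show 1 ≤ 2 by norm_num)
        simpa using h
    _ ≤ 1 := sum_dens_le_one c A B

lemma dens_comm (c : V → V → C) (hc : ∀ u v, c u v = c v u) (σ : C) (A B : Finset V) :
    dens c σ A B = dens c σ B A := by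
  unfold _root_.dens
  rw [mul_comm ((A.card : ℝ))]
  congr 2
  refine Finset.card_bij' (fun p _ => p.swap) (fun p _ => p.swap) ?_ ?_ ?_ ?_ <;>
    simp only [mem_filter, mem_product, Prod.fst_swap, Prod.snd_swap, Prod.swap_swap]
  · rintro p ⟨⟨h1, h2⟩, h3⟩
    exact ⟨⟨h2, h1⟩, by rw [← hc]; exact h3⟩
  · rintro p ⟨⟨h1, h2⟩, h3⟩
    exact ⟨⟨h2, h1⟩, by rw [← hc]; exact h3⟩
  · intro p _; trivial
  · intro p _; trivial

lemma indPair_comm [Fintype C] (c : V → V → C) (hc : ∀ u v, c u v = c v u) (A B : Finset V) :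
    indPair c A B = indPair c B A := by
  unfold indPair
  exact Finset.sum_congr rfl fun σ _ => by rw [dens_comm c hc]

lemma cnt_eq_dens_mul (c : V → V → C) (σ : C) (A B : Finset V) :
    (((A ×ˢ B).filter (fun p => c p.1 p.2 = σ)).card : ℝ)
      = dens c σ A B * ((A.card : ℝ) * (B.card : ℝ)) := by
  rcases eq_or_ne ((A.card : ℝ) * (B.card : ℝ)) 0 with h | h
  · have hAB : ((A ×ˢ B).card : ℝ) = 0 := by rw [card_product]; push_cast; linarith [h]
    have hAB' : (A ×ˢ B).card = 0 := by exact_mod_cast hAB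
    have hf : ((A ×ˢ B).filter (fun p => c p.1 p.2 = σ)).card = 0 :=
      Nat.le_zero.1 (hAB' ▸ card_filter_le _ _)
    rw [hf, h, mul_zero]; simp
  · rw [_root_.dens, div_mul_cancel₀ _ h]

lemma cnt_biUnion {ι : Type*} [DecidableEq ι] (c : V → V → C) (σ : C)
    (s t : Finset ι) (A B : ι → Finset V)
    (hA : ∀ j ∈ s, ∀ j' ∈ s, j ≠ j' → Disjoint (A j) (A j'))
    (hB : ∀ j ∈ t, ∀ j' ∈ t, j ≠ j' → Disjoint (B j) (B j')) :
    (((s.biUnion A) ×ˢ (t.biUnion B)).filter (fun p => c p.1 p.2 = σ)).card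
      = ∑ j ∈ s, ∑ j' ∈ t, ((A j ×ˢ B j').filter (fun p => c p.1 p.2 = σ)).card := by
  have key : ∀ (X Y : Finset V), ((X ×ˢ Y).filter (fun p => c p.1 p.2 = σ)).card
      = ∑ a ∈ X, ∑ b ∈ Y, (if c a b = σ then 1 else 0) := by
    intro X Y
    rw [Finset.card_filter, Finset.sum_product]
  rw [key]
  simp only [key]
  rw [Finset.sum_biUnion (fun j hj j' hj' hne => hA j hj j' hj' hne)]
  refine Finset.sum_congr rfl fun j _ => ?_
  have : ∀ a ∈ A j, ∑ b ∈ t.biUnion B, (if c a b = σ then 1 else 0)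
      = ∑ j' ∈ t, ∑ b ∈ B j', (if c a b = σ then 1 else 0) := fun a _ =>
    Finset.sum_biUnion (fun j1 hj1 j2 hj2 hne => hB j1 hj1 j2 hj2 hne)
  rw [Finset.sum_congr rfl this, Finset.sum_comm]

lemma pair_step {ι : Type*} [DecidableEq ι] [Fintype C] (c : V → V → C)
    (s t : Finset ι) (A B : ι → Finset V) (Q : ℝ) (hQ : 0 ≤ Q)
    (hA : ∀ j ∈ s, ∀ j' ∈ s, j ≠ j' → Disjoint (A j) (A j'))
    (hB : ∀ j ∈ t, ∀ j' ∈ t, j ≠ j' → Disjoint (B j) (B j')) :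
    (((s.biUnion A).card : ℝ) * ((t.biUnion B).card : ℝ) / Q)
        * indPair c (s.biUnion A) (t.biUnion B)
      ≤ ∑ j ∈ s, ∑ j' ∈ t,
          (((A j).card : ℝ) * ((B j').card : ℝ) / Q) * indPair c (A j) (B j') := by
  set X := s.biUnion A with hX
  set Y := t.biUnion B with hY
  have hSA : (X.card : ℝ) = ∑ j ∈ s, ((A j).card : ℝ) := by
    rw [hX, Finset.card_biUnion hA]; push_cast; rfl
  have hSB : (Y.card : ℝ) = ∑ j' ∈ t, ((B j').card : ℝ) := by
    rw [hY, Finset.card_biUnion hB]; push_cast; rfl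
  have core : ∀ σ : C, (X.card : ℝ) * (Y.card : ℝ) * dens c σ X Y ^ 2
      ≤ ∑ j ∈ s, ∑ j' ∈ t,
          ((A j).card : ℝ) * ((B j').card : ℝ) * dens c σ (A j) (B j') ^ 2 := by
    intro σ
    rcases eq_or_ne ((X.card : ℝ) * (Y.card : ℝ)) 0 with h0 | h0
    · rw [h0, zero_mul]
      exact Finset.sum_nonneg fun j _ => Finset.sum_nonneg fun j' _ => by positivity
    · have hpos : 0 < (X.card : ℝ) * (Y.card : ℝ) :=
        lt_of_le_of_ne (by positivity) (Ne.symm h0)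
      set w : ι × ι → ℝ := fun q => ((A q.1).card : ℝ) * ((B q.2).card : ℝ) with hw
      set x : ι × ι → ℝ := fun q => dens c σ (A q.1) (B q.2) with hxd
      have hSw : ∑ q ∈ s ×ˢ t, w q = (X.card : ℝ) * (Y.card : ℝ) := by
        rw [Finset.sum_product, hSA, hSB, Finset.sum_mul_sum]
      have hcnt : ((((X ×ˢ Y).filter (fun p => c p.1 p.2 = σ)).card : ℝ))
          = ∑ j ∈ s, ∑ j' ∈ t,
              ((((A j ×ˢ B j').filter (fun p => c p.1 p.2 = σ)).card : ℝ)) := by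
        rw [hX, hY, cnt_biUnion c σ s t A B hA hB]; push_cast; rfl
      have hS : (((X ×ˢ Y).filter (fun p => c p.1 p.2 = σ)).card : ℝ)
          = ∑ q ∈ s ×ˢ t, w q * x q := by
        rw [hcnt, Finset.sum_product]
        refine Finset.sum_congr rfl fun j _ => Finset.sum_congr rfl fun j' _ => ?_
        rw [cnt_eq_dens_mul]; simp only [hw, hxd]; ring
      have hcs : (∑ q ∈ s ×ˢ t, w q * x q) ^ 2
          ≤ ((X.card : ℝ) * (Y.card : ℝ)) * ∑ q ∈ s ×ˢ t, w q * x q ^ 2 := by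
        have hwn : ∀ q : ι × ι, 0 ≤ w q := fun q => by simp only [hw]; positivity
        calc (∑ q ∈ s ×ˢ t, w q * x q) ^ 2
            = (∑ q ∈ s ×ˢ t, Real.sqrt (w q) * (Real.sqrt (w q) * x q)) ^ 2 := by
              congr 1
              refine Finset.sum_congr rfl fun q _ => ?_
              rw [← mul_assoc, Real.mul_self_sqrt (hwn q)]
          _ ≤ (∑ q ∈ s ×ˢ t, Real.sqrt (w q) ^ 2)
                * ∑ q ∈ s ×ˢ t, (Real.sqrt (w q) * x q) ^ 2 :=
              Finset.sum_mul_sq_le_sq_mul_sq _ _ _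
          _ = ((X.card : ℝ) * (Y.card : ℝ)) * ∑ q ∈ s ×ˢ t, w q * x q ^ 2 := by
              rw [← hSw]
              congr 1
              · exact Finset.sum_congr rfl fun q _ => Real.sq_sqrt (hwn q)
              · refine Finset.sum_congr rfl fun q _ => ?_
                rw [mul_pow, Real.sq_sqrt (hwn q)]
      have hdens : dens c σ X Y
          = (∑ q ∈ s ×ˢ t, w q * x q) / ((X.card : ℝ) * (Y.card : ℝ)) := by
        rw [_root_.dens, hS]
      rw [hdens]
      have hrw : (X.card : ℝ) * (Y.card : ℝ)
            * ((∑ q ∈ s ×ˢ t, w q * x q) / ((X.card : ℝ) * (Y.card : ℝ))) ^ 2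
          = (∑ q ∈ s ×ˢ t, w q * x q) ^ 2 / ((X.card : ℝ) * (Y.card : ℝ)) := by
        field_simp
      rw [hrw, div_le_iff₀ hpos]
      calc (∑ q ∈ s ×ˢ t, w q * x q) ^ 2
          ≤ ((X.card : ℝ) * (Y.card : ℝ)) * ∑ q ∈ s ×ˢ t, w q * x q ^ 2 := hcs
        _ = (∑ q ∈ s ×ˢ t, w q * x q ^ 2) * ((X.card : ℝ) * (Y.card : ℝ)) := mul_comm _ _
        _ = (∑ j ∈ s, ∑ j' ∈ t,
              ((A j).card : ℝ) * ((B j').card : ℝ) * dens c σ (A j) (B j') ^ 2)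
              * ((X.card : ℝ) * (Y.card : ℝ)) := by
            rw [Finset.sum_product]
  calc ((X.card : ℝ) * (Y.card : ℝ) / Q) * indPair c X Y
      = (∑ σ : C, (X.card : ℝ) * (Y.card : ℝ) * dens c σ X Y ^ 2) / Q := by
        rw [indPair, div_mul_eq_mul_div, Finset.mul_sum]
    _ ≤ (∑ σ : C, ∑ j ∈ s, ∑ j' ∈ t,
          ((A j).card : ℝ) * ((B j').card : ℝ) * dens c σ (A j) (B j') ^ 2) / Q := by
        rw [div_eq_mul_inv, div_eq_mul_inv]
        exact mul_le_mul_of_nonneg_right (Finset.sum_le_sum fun σ _ => core σ)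
          (inv_nonneg.2 hQ)
    _ = ∑ j ∈ s, ∑ j' ∈ t,
          (((A j).card : ℝ) * ((B j').card : ℝ) / Q) * indPair c (A j) (B j') := by
        rw [Finset.sum_comm, Finset.sum_div]
        refine Finset.sum_congr rfl fun j _ => ?_
        rw [Finset.sum_comm, Finset.sum_div]
        refine Finset.sum_congr rfl fun j' _ => ?_
        rw [indPair, div_mul_eq_mul_div, Finset.mul_sum]

lemma sum_pairs_reorient {m k : ℕ} (f : Fin m → Fin k) (T : Fin m × Fin m → ℝ)
    (hT : ∀ q : Fin m × Fin m, T q.swap = T q) :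
    ∑ q ∈ univ.filter (fun q : Fin m × Fin m => f q.1 < f q.2), T q
      = ∑ q ∈ univ.filter (fun q : Fin m × Fin m => q.1 < q.2 ∧ f q.1 ≠ f q.2), T q := by
  refine Finset.sum_nbij' (fun q => if q.1 < q.2 then q else q.swap)
    (fun q => if f q.1 < f q.2 then q else q.swap) ?_ ?_ ?_ ?_ ?_
  · intro q hq
    simp only [mem_filter, mem_univ, true_and] at hq ⊢
    split_ifs with h
    · exact ⟨h, ne_of_lt hq⟩
    · refine ⟨?_, ?_⟩
      · simp only [Prod.fst_swap, Prod.snd_swap]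
        exact lt_of_le_of_ne (not_lt.1 h) fun e => (ne_of_lt hq) (by rw [e])
      · simp only [Prod.fst_swap, Prod.snd_swap]
        exact (ne_of_lt hq).symm
  · intro q hq
    simp only [mem_filter, mem_univ, true_and] at hq ⊢
    split_ifs with h
    · exact h
    · simp only [Prod.fst_swap, Prod.snd_swap]
      exact lt_of_le_of_ne (not_lt.1 h) hq.2.symm
  · intro q hq
    simp only [mem_filter, mem_univ, true_and] at hq
    by_cases h : q.1 < q.2
    · simp [h, hq]
    · simp [h, asymm hq]
  · intro q hq
    simp only [mem_filter, mem_univ, true_and] at hq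
    by_cases h : f q.1 < f q.2
    · simp [h, hq.1]
    · simp [h, asymm hq.1]
  · intro q hq
    by_cases h : q.1 < q.2
    · simp [h]
    · simp [h, hT q]

lemma sum_lt_pairs_eq {m : ℕ} (a : Fin m → ℝ) :
    2 * ∑ q ∈ univ.filter (fun q : Fin m × Fin m => q.1 < q.2), a q.1 * a q.2
      = (∑ j, a j) ^ 2 - ∑ j, (a j) ^ 2 := by
  have h1 : (∑ j, a j) ^ 2 = ∑ q ∈ (univ : Finset (Fin m × Fin m)), a q.1 * a q.2 := by
    rw [sq, Finset.sum_mul_sum, ← Finset.univ_product_univ, Finset.sum_product]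
  have h2 := Finset.sum_filter_add_sum_filter_not (univ : Finset (Fin m × Fin m))
    (fun q => q.1 < q.2) (fun q => a q.1 * a q.2)
  have h3 := Finset.sum_filter_add_sum_filter_not
    ((univ : Finset (Fin m × Fin m)).filter (fun q => ¬ q.1 < q.2))
    (fun q => q.2 < q.1) (fun q => a q.1 * a q.2)
  have hgt : ∑ q ∈ ((univ : Finset (Fin m × Fin m)).filter
        (fun q => ¬ q.1 < q.2)).filter (fun q => q.2 < q.1), a q.1 * a q.2
      = ∑ q ∈ (univ : Finset (Fin m × Fin m)).filter (fun q => q.1 < q.2),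
          a q.1 * a q.2 := by
    rw [Finset.filter_filter]
    refine Finset.sum_nbij' Prod.swap Prod.swap ?_ ?_ ?_ ?_ ?_
    · intro q hq
      simp only [mem_filter, mem_univ, true_and, Prod.fst_swap, Prod.snd_swap] at hq ⊢
      exact hq.2
    · intro q hq
      simp only [mem_filter, mem_univ, true_and, Prod.fst_swap, Prod.snd_swap] at hq ⊢
      exact ⟨asymm hq, hq⟩
    · intro q _; exact Prod.swap_swap q
    · intro q _; exact Prod.swap_swap q
    · intro q _
      simp only [Prod.fst_swap, Prod.snd_swap]
      ring
  have hdiag : ∑ q ∈ ((univ : Finset (Fin m × Fin m)).filter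
        (fun q => ¬ q.1 < q.2)).filter (fun q => ¬ q.2 < q.1), a q.1 * a q.2
      = ∑ j, (a j) ^ 2 := by
    rw [Finset.filter_filter]
    refine Finset.sum_nbij' Prod.fst (fun j => (j, j)) ?_ ?_ ?_ ?_ ?_
    · intro q _; exact mem_univ _
    · intro j _
      simp
    · rintro ⟨x, y⟩ hq
      simp only [mem_filter, mem_univ, true_and] at hq
      have h12 : x = y := le_antisymm (not_lt.1 hq.2) (not_lt.1 hq.1)
      simp [h12]
    · intro j _; rfl
    · rintro ⟨x, y⟩ hq
      simp only [mem_filter, mem_univ, true_and] at hq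
      have h12 : x = y := le_antisymm (not_lt.1 hq.2) (not_lt.1 hq.1)
      simp [h12, sq]
  linarith [h1, h2, h3, hgt, hdiag]

end Aux

/-- for partitions `C` and `C'` of a colored complete graph with `C'`
refining `C`, the indexes satisfy `0 ≤ ind(C) ≤ ind(C') ≤ 1`. -/
theorem index_monotone_refinement {V C : Type*} [Fintype V] [DecidableEq V]
    [Fintype C] [DecidableEq C] (c : V → V → C) (hc : ∀ u v, c u v = c v u)
    {k k' : ℕ} (P : Fin k → Finset V) (P' : Fin k' → Finset V)
    (hP : IsPartition P) (hP' : IsPartition P') (href : Refines P' P) :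
    0 ≤ indPart c P ∧ indPart c P ≤ indPart c P' ∧ indPart c P' ≤ 1 := by
  obtain ⟨hPd, hPc⟩ := hP
  obtain ⟨hP'd, hP'c⟩ := hP'
  set Q : ℝ := ((Fintype.card V).choose 2 : ℝ) with hQdef
  have hQ : 0 ≤ Q := Nat.cast_nonneg _
  -- nonnegativity of each term of indPart
  have hT0 : ∀ {m : ℕ} (R : Fin m → Finset V) (q : Fin m × Fin m),
      0 ≤ (((R q.1).card : ℝ) * ((R q.2).card : ℝ) / Q) * indPair c (R q.1) (R q.2) :=
    fun R q => mul_nonneg (by positivity) (indPair_nonneg c _ _)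
  have h1 : 0 ≤ indPart c P := by
    rw [indPart]
    exact Finset.sum_nonneg fun p _ => hT0 P p
  -- part 3 : indPart c P' ≤ 1
  have hcardsum : (Fintype.card V : ℝ) = ∑ j, ((P' j).card : ℝ) := by
    have huniv : (univ : Finset V) = univ.biUnion P' := by
      ext v
      simp only [mem_univ, mem_biUnion, true_iff]
      obtain ⟨i, hi⟩ := hP'c v
      exact ⟨i, trivial, hi⟩
    have := Finset.card_biUnion
      (fun j (_ : j ∈ (univ : Finset (Fin k'))) j' _ h => hP'd j j' h)
    rw [Fintype.card, huniv, this]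
    push_cast; rfl
  have hwsum : ∑ q ∈ univ.filter (fun q : Fin k' × Fin k' => q.1 < q.2),
      ((P' q.1).card : ℝ) * ((P' q.2).card : ℝ) ≤ Q := by
    have hid := sum_lt_pairs_eq (fun j => ((P' j).card : ℝ))
    have hsq : (∑ j, ((P' j).card : ℝ)) ≤ ∑ j, ((P' j).card : ℝ) ^ 2 := by
      refine Finset.sum_le_sum fun j _ => ?_
      have : (P' j).card ≤ (P' j).card ^ 2 := Nat.le_self_pow two_ne_zero _
      exact_mod_cast this
    have hch : Q = (Fintype.card V : ℝ) * ((Fintype.card V : ℝ) - 1) / 2 := by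
      rw [hQdef, Nat.cast_choose_two]
    rw [← hcardsum] at hid hsq
    nlinarith [hid, hsq, hch]
  have h3 : indPart c P' ≤ 1 := by
    rw [indPart]
    calc ∑ q ∈ univ.filter (fun q : Fin k' × Fin k' => q.1 < q.2),
          (((P' q.1).card : ℝ) * ((P' q.2).card : ℝ) / Q) * indPair c (P' q.1) (P' q.2)
        ≤ ∑ q ∈ univ.filter (fun q : Fin k' × Fin k' => q.1 < q.2),
          (((P' q.1).card : ℝ) * ((P' q.2).card : ℝ) / Q) :=
          Finset.sum_le_sum fun q _ =>
            mul_le_of_le_one_right (by positivity) (indPair_le_one c _ _)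
      _ = (∑ q ∈ univ.filter (fun q : Fin k' × Fin k' => q.1 < q.2),
            ((P' q.1).card : ℝ) * ((P' q.2).card : ℝ)) / Q := by
          rw [Finset.sum_div]
      _ ≤ 1 := div_le_one_of_le₀ hwsum hQ
  -- part 2 : indPart c P ≤ indPart c P'
  choose f hf using href
  have hfib : ∀ i, P i = (univ.filter (fun j => f j = i)).biUnion P' := by
    intro i
    ext v
    simp only [mem_biUnion, mem_filter, mem_univ, true_and]
    constructor
    · intro hv
      obtain ⟨j, hj⟩ := hP'c v
      refine ⟨j, ?_, hj⟩
      by_contra hne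
      exact Finset.disjoint_left.1 (hPd i (f j) (fun e => hne e.symm)) hv (hf j hj)
    · rintro ⟨j, rfl, hj⟩
      exact hf j hj
  set T : Fin k' × Fin k' → ℝ := fun q =>
    (((P' q.1).card : ℝ) * ((P' q.2).card : ℝ) / Q) * indPair c (P' q.1) (P' q.2) with hTdef
  have hTswap : ∀ q : Fin k' × Fin k', T q.swap = T q := by
    intro q
    simp only [hTdef, Prod.fst_swap, Prod.snd_swap]
    rw [indPair_comm c hc, mul_comm (((P' q.2).card : ℝ))]
  have h2 : indPart c P ≤ indPart c P' := by
    rw [indPart, indPart]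
    calc ∑ p ∈ univ.filter (fun p : Fin k × Fin k => p.1 < p.2),
          (((P p.1).card : ℝ) * ((P p.2).card : ℝ) / Q) * indPair c (P p.1) (P p.2)
        ≤ ∑ p ∈ univ.filter (fun p : Fin k × Fin k => p.1 < p.2),
            ∑ j ∈ univ.filter (fun j => f j = p.1), ∑ j' ∈ univ.filter (fun j => f j = p.2),
              (((P' j).card : ℝ) * ((P' j').card : ℝ) / Q) * indPair c (P' j) (P' j') := by
          refine Finset.sum_le_sum fun p _ => ?_
          rw [hfib p.1, hfib p.2]
          exact pair_step c _ _ P' P' Q hQ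
            (fun j _ j' _ h => hP'd j j' h) (fun j _ j' _ h => hP'd j j' h)
      _ = ∑ q ∈ univ.filter (fun q : Fin k' × Fin k' => f q.1 < f q.2), T q := by
          rw [← Finset.sum_fiberwise_of_maps_to
            (g := fun q : Fin k' × Fin k' => (f q.1, f q.2))
            (t := univ.filter (fun p : Fin k × Fin k => p.1 < p.2))
            (fun q hq => by
              simp only [mem_filter, mem_univ, true_and] at hq ⊢
              exact hq) T]
          refine Finset.sum_congr rfl fun p hp => ?_
          simp only [mem_filter, mem_univ, true_and] at hp
          have hset : (univ.filter (fun q : Fin k' × Fin k' => f q.1 < f q.2)).filter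
                (fun q => (f q.1, f q.2) = p)
              = (univ.filter (fun j => f j = p.1)) ×ˢ (univ.filter (fun j => f j = p.2)) := by
            rw [Finset.filter_filter, ← Finset.filter_product, Finset.univ_product_univ]
            refine Finset.filter_congr fun q _ => ?_
            constructor
            · rintro ⟨_, h⟩
              exact ⟨congrArg Prod.fst h, congrArg Prod.snd h⟩
            · rintro ⟨ha, hb⟩
              exact ⟨by rw [ha, hb]; exact hp, Prod.ext ha hb⟩
          rw [hset, Finset.sum_product]
      _ = ∑ q ∈ univ.filter (fun q : Fin k' × Fin k' => q.1 < q.2 ∧ f q.1 ≠ f q.2), T q :=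
          sum_pairs_reorient f T hTswap
      _ ≤ ∑ q ∈ univ.filter (fun q : Fin k' × Fin k' => q.1 < q.2), T q := by
          refine Finset.sum_le_sum_of_subset_of_nonneg
            (by intro q hq
                simp only [mem_filter, mem_univ, true_and] at hq ⊢
                exact hq.1) fun q _ _ => hT0 P' q
  exact ⟨h1, h2, h3⟩
end

section
/- For any integer k > 0, function f: ℕ → ℕ, and real γ > 0, there exists T = T(k, f, γ) such that any interval equipartition I of a string S with |I| = k has an (f, γ)-robust interval equipartition refinement I' consisting of at most T intervals. -/
open Finset

/-- Density of symbol `σ` in the substring indexed by `J`. -/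
noncomputable def densStr {n : ℕ} {C : Type*} [DecidableEq C]
    (S : Fin n → C) (σ : C) (J : Finset (Fin n)) : ℝ :=
  ((J.filter (fun v => S v = σ)).card : ℝ) / (J.card : ℝ)

/-- Index of a substring: sum of squared symbol densities. -/
noncomputable def indStr {n : ℕ} {C : Type*} [Fintype C] [DecidableEq C]
    (S : Fin n → C) (J : Finset (Fin n)) : ℝ :=
  ∑ σ : C, (densStr S σ J) ^ 2

/-- Index of an interval partition `I = (I_1,…,I_k)` of the string `S`. -/
noncomputable def indIntPart {n : ℕ} {C : Type*} [Fintype C] [DecidableEq C]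
    (S : Fin n → C) {k : ℕ} (I : Fin k → Finset (Fin n)) : ℝ :=
  ∑ i : Fin k, ((I i).card : ℝ) / (n : ℝ) * indStr S (I i)

/-- `I` is an interval partition of `Fin n`: the parts are pairwise disjoint, cover
everything, and are consecutive intervals appearing in order of their index. -/
def IsIntervalPartition {n k : ℕ} (I : Fin k → Finset (Fin n)) : Prop :=
  (∀ i j, i ≠ j → Disjoint (I i) (I j)) ∧ (∀ v : Fin n, ∃ i, v ∈ I i) ∧
    (∀ i j : Fin k, i < j → ∀ x ∈ I i, ∀ y ∈ I j, x < y)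

/-- Equitable: all parts have sizes differing by at most 1. -/
def IsEquitable {n k : ℕ} (I : Fin k → Finset (Fin n)) : Prop :=
  ∀ i j, (I i).card ≤ (I j).card + 1

/-- `I'` refines `I`: every interval of `I'` is contained in an interval of `I`. -/
def IntRefines {n k k' : ℕ} (I' : Fin k' → Finset (Fin n)) (I : Fin k → Finset (Fin n)) : Prop :=
  ∀ j, ∃ i, I' j ⊆ I i

/-- An interval equipartition `I` of size `k` is `(f,γ)`-robust if every refining interval
equipartition of size at most `f(k)` has index at most `ind(I) + γ`. -/
def IsIntRobust {n : ℕ} {C : Type*} [Fintype C] [DecidableEq C] (S : Fin n → C)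
    (f : ℕ → ℕ) (γ : ℝ) {k : ℕ} (I : Fin k → Finset (Fin n)) : Prop :=
  ∀ (k' : ℕ) (I' : Fin k' → Finset (Fin n)),
    IsIntervalPartition I' → IsEquitable I' → IntRefines I' I → k' ≤ f k →
    indIntPart S I' ≤ indIntPart S I + γ

lemma densStr_nonneg {n : ℕ} {C : Type*} [DecidableEq C]
    (S : Fin n → C) (σ : C) (J : Finset (Fin n)) : 0 ≤ densStr S σ J :=
  div_nonneg (by positivity) (by positivity)

lemma densStr_le_one {n : ℕ} {C : Type*} [DecidableEq C]
    (S : Fin n → C) (σ : C) (J : Finset (Fin n)) : densStr S σ J ≤ 1 :=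
  div_le_one_of_le₀ (by exact_mod_cast Finset.card_filter_le _ _) (by positivity)

lemma indStr_nonneg {n : ℕ} {C : Type*} [Fintype C] [DecidableEq C]
    (S : Fin n → C) (J : Finset (Fin n)) : 0 ≤ indStr S J :=
  Finset.sum_nonneg fun _ _ => sq_nonneg _

lemma indStr_le_one {n : ℕ} {C : Type*} [Fintype C] [DecidableEq C]
    (S : Fin n → C) (J : Finset (Fin n)) : indStr S J ≤ 1 := by
  have h1 : indStr S J ≤ ∑ σ : C, densStr S σ J := by
    apply Finset.sum_le_sum
    intro σ _
    have := densStr_nonneg S σ J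
    have := densStr_le_one S σ J
    nlinarith
  have h2 : ∑ σ : C, densStr S σ J ≤ 1 := by
    unfold densStr
    rw [← Finset.sum_div]
    apply div_le_one_of_le₀ _ (by positivity)
    have h : ∑ σ : C, ((J.filter (fun v => S v = σ)).card : ℝ)
        = ((∑ σ : C, (J.filter (fun v => S v = σ)).card : ℕ) : ℝ) := by push_cast; ring
    rw [h]
    have := (Finset.card_eq_sum_card_fiberwise (f := S) (s := J) (t := Finset.univ)
      (fun x _ => Finset.mem_univ _)).symm
    exact_mod_cast le_of_eq this
  linarith

lemma sum_card_le {n k : ℕ} (I : Fin k → Finset (Fin n))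
    (hd : ∀ i j, i ≠ j → Disjoint (I i) (I j)) : ∑ i, (I i).card ≤ n := by
  rw [← Finset.card_biUnion (fun i _ j _ hij => hd i j hij)]
  simpa using Finset.card_le_univ (Finset.univ.biUnion I)

lemma indIntPart_nonneg {n : ℕ} {C : Type*} [Fintype C] [DecidableEq C]
    (S : Fin n → C) {k : ℕ} (I : Fin k → Finset (Fin n)) : 0 ≤ indIntPart S I :=
  Finset.sum_nonneg fun _ _ => mul_nonneg (div_nonneg (by positivity) (by positivity))
    (indStr_nonneg S _)

lemma indIntPart_le_one {n : ℕ} {C : Type*} [Fintype C] [DecidableEq C]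
    (S : Fin n → C) {k : ℕ} (I : Fin k → Finset (Fin n))
    (hd : ∀ i j, i ≠ j → Disjoint (I i) (I j)) : indIntPart S I ≤ 1 := by
  have h1 : indIntPart S I ≤ ∑ i, ((I i).card : ℝ) / (n : ℝ) := by
    apply Finset.sum_le_sum
    intro i _
    have := indStr_le_one S (I i)
    have := indStr_nonneg S (I i)
    have hnn : (0:ℝ) ≤ ((I i).card : ℝ) / (n : ℝ) := div_nonneg (by positivity) (by positivity)
    nlinarith
  have h2 : ∑ i, ((I i).card : ℝ) / (n : ℝ) ≤ 1 := by
    rw [← Finset.sum_div]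
    apply div_le_one_of_le₀ _ (by positivity)
    exact_mod_cast sum_card_le I hd
  linarith

/-- growth function: monotone, ≥ id, ≥ f. -/
def gfun (f : ℕ → ℕ) (m : ℕ) : ℕ := max m ((Finset.range (m + 1)).sup f)

lemma le_gfun (f : ℕ → ℕ) (m : ℕ) : m ≤ gfun f m := le_max_left _ _

lemma f_le_gfun (f : ℕ → ℕ) (m : ℕ) : f m ≤ gfun f m :=
  le_trans (Finset.le_sup (Finset.self_mem_range_succ m)) (le_max_right _ _)

lemma gfun_mono (f : ℕ → ℕ) : Monotone (gfun f) := by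
  intro a b hab
  exact max_le_max hab (Finset.sup_mono (Finset.range_subset_range.mpr (by omega)))

lemma le_gfun_iterate (f : ℕ → ℕ) (r m : ℕ) : m ≤ (gfun f)^[r] m := by
  induction r generalizing m with
  | zero => simp
  | succ r ih =>
    rw [Function.iterate_succ_apply]
    exact le_trans (le_gfun f m) (ih _)

lemma key_step {n : ℕ} {C : Type*} [Fintype C] [DecidableEq C] (S : Fin n → C)
    (f : ℕ → ℕ) (γ : ℝ) (hγ : 0 < γ) {k : ℕ} (I : Fin k → Finset (Fin n)) :
    ∀ (r : ℕ) (k' : ℕ) (J : Fin k' → Finset (Fin n)),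
      IsIntervalPartition J → IsEquitable J → IntRefines J I →
      1 ≤ indIntPart S J + r * γ →
      ∃ (k'' : ℕ) (J' : Fin k'' → Finset (Fin n)), k'' ≤ (gfun f)^[r] k' ∧
        IsIntervalPartition J' ∧ IsEquitable J' ∧ IntRefines J' I ∧ IsIntRobust S f γ J' := by
  intro r
  induction r with
  | zero =>
    intro k' J hJp hJe hJr hind
    refine ⟨k', J, by simp, hJp, hJe, hJr, ?_⟩
    intro k'' J'' hp _ _ _
    have h1 := indIntPart_le_one S J'' hp.1
    simp at hind
    linarith
  | succ r ih =>
    intro k' J hJp hJe hJr hind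
    by_cases hrob : IsIntRobust S f γ J
    · exact ⟨k', J, le_gfun_iterate f _ _, hJp, hJe, hJr, hrob⟩
    · simp only [IsIntRobust, not_forall] at hrob
      obtain ⟨k'', J', hp', he', hr', hk'', hgt⟩ := hrob
      push_neg at hgt
      have hrI : IntRefines J' I := by
        intro j
        obtain ⟨i, hi⟩ := hr' j
        obtain ⟨i', hi'⟩ := hJr i
        exact ⟨i', hi.trans hi'⟩
      have hind' : 1 ≤ indIntPart S J' + r * γ := by
        push_cast at hind ⊢
        linarith
      obtain ⟨m, K, hm, hK⟩ := ih k'' J' hp' he' hrI hind'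
      refine ⟨m, K, ?_, hK⟩
      calc m ≤ (gfun f)^[r] k'' := hm
        _ ≤ (gfun f)^[r] (gfun f k') := Monotone.iterate (gfun_mono f) r
            (le_trans hk'' (f_le_gfun f k'))
        _ = (gfun f)^[r + 1] k' := (Function.iterate_succ_apply (gfun f) r k').symm

/-- robust partitioning of intervals: for any `k > 0`, `f` and `γ > 0`
there exists `T = T(k,f,γ)` such that any interval equipartition of size `k` of any string
has an `(f,γ)`-robust refining interval equipartition of size at most `T`. -/
theorem robust_interval_partition_exists (k : ℕ) (hk : 0 < k) (f : ℕ → ℕ) (γ : ℝ)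
    (hγ : 0 < γ) :
    ∃ T : ℕ, ∀ (n : ℕ) (C : Type) [Fintype C] [DecidableEq C] (S : Fin n → C)
      (I : Fin k → Finset (Fin n)), IsIntervalPartition I → IsEquitable I →
      ∃ (k' : ℕ) (I' : Fin k' → Finset (Fin n)), k' ≤ T ∧
        IsIntervalPartition I' ∧ IsEquitable I' ∧ IntRefines I' I ∧ IsIntRobust S f γ I' := by
  refine ⟨(gfun f)^[⌈γ⁻¹⌉₊] k, ?_⟩
  intro n C _ _ S I hIp hIe
  have hind : 1 ≤ indIntPart S I + (⌈γ⁻¹⌉₊ : ℝ) * γ := by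
    have h1 : γ⁻¹ ≤ (⌈γ⁻¹⌉₊ : ℝ) := Nat.le_ceil _
    have h2 : γ⁻¹ * γ = 1 := inv_mul_cancel₀ (ne_of_gt hγ)
    have h3 := indIntPart_nonneg S I
    nlinarith
  have hrefl : IntRefines I I := fun j => ⟨j, subset_rfl⟩
  obtain ⟨k', I', h1, h2, h3, h4, h5⟩ :=
    key_step S f γ hγ I ⌈γ⁻¹⌉₊ k I hIp hIe hrefl hind
  exact ⟨k', I', h1, h2, h3, h4, h5⟩
end
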